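/- arXiv:1803.01718 — 4 statements merged into one kernel-verified Lean document; each statement's English description precedes it below -/
import Mathlib

section
/- Let E be a Banach space and let 1 ≤ q ≤ p ≤ s ≤ r < ∞. Then every mid (q,p)-summable sequence in E is mid (r,s)-summable, and ‖(x_j)‖_{r,s} ≤ ‖(x_j)‖_{q,p} for every mid (q,p)-summable sequence (x_j)_{j=1}^∞ in E. In particular, every mid p-summable sequence is mid s-summable with ‖(x_j)‖_{mid,s} ≤ ‖(x_j)‖_{mid,p} whenever p ≤ s. -/
open NormedSpace MeasureTheory

noncomputable section

/-- A sequence `x` in `E` is weakly `p`-summable: `∑_j |φ(x_j)|^p < ∞` for all `φ ∈ E*`. -/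
def WeaklySummable (𝕜 : Type*) [RCLike 𝕜] {E : Type*} [NormedAddCommGroup E]
    [NormedSpace 𝕜 E] (p : ℝ) (x : ℕ → E) : Prop :=
  ∀ φ : StrongDual 𝕜 E, Summable fun j => ‖φ (x j)‖ ^ p

/-- The weak `p`-norm of a sequence: `sup_{φ ∈ B_{E*}} (∑_j |φ(x_j)|^p)^{1/p}`. -/
def weakNorm (𝕜 : Type*) [RCLike 𝕜] {E : Type*} [NormedAddCommGroup E]
    [NormedSpace 𝕜 E] (p : ℝ) (x : ℕ → E) : ℝ :=
  ⨆ φ : {φ : StrongDual 𝕜 E // ‖φ‖ ≤ 1}, (∑' j, ‖φ.1 (x j)‖ ^ p) ^ (1 / p)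

/-- A sequence `x` in `E` is mid `(q,p)`-summable:
`∑_j (∑_n |x_n^*(x_j)|^p)^{q/p} < ∞` for every weakly `p`-summable sequence `(x_n^*)` in `E*`. -/
def MidSummable (𝕜 : Type*) [RCLike 𝕜] {E : Type*} [NormedAddCommGroup E]
    [NormedSpace 𝕜 E] (q p : ℝ) (x : ℕ → E) : Prop :=
  ∀ xs : ℕ → StrongDual 𝕜 E, WeaklySummable 𝕜 p xs →
    Summable fun j => (∑' n, ‖xs n (x j)‖ ^ p) ^ (q / p)

/-- The mid `(q,p)`-norm:
`sup over (x_n^*) in the closed unit ball of ℓ_p^w(E*)` of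
`(∑_j (∑_n |x_n^*(x_j)|^p)^{q/p})^{1/q}`. -/
def midNorm (𝕜 : Type*) [RCLike 𝕜] {E : Type*} [NormedAddCommGroup E]
    [NormedSpace 𝕜 E] (q p : ℝ) (x : ℕ → E) : ℝ :=
  ⨆ xs : {xs : ℕ → StrongDual 𝕜 E // WeaklySummable 𝕜 p xs ∧ weakNorm 𝕜 p xs ≤ 1},
    (∑' j, (∑' n, ‖xs.1 n (x j)‖ ^ p) ^ (q / p)) ^ (1 / q)

/-- `u : X → Y` is absolutely `p`-summing: there is `C > 0` with
`(∑_{j=1}^k ‖u(x_j)‖^p)^{1/p} ≤ C sup_{φ ∈ B_{X*}} (∑_{j=1}^k |φ(x_j)|^p)^{1/p}`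
for all finite families. -/
def AbsolutelySumming (𝕜 : Type*) [RCLike 𝕜] {X Y : Type*} [NormedAddCommGroup X]
    [NormedSpace 𝕜 X] [NormedAddCommGroup Y] [NormedSpace 𝕜 Y] (p : ℝ)
    (u : X →L[𝕜] Y) : Prop :=
  ∃ C > 0, ∀ (k : ℕ) (z : Fin k → X),
    (∑ j, ‖u (z j)‖ ^ p) ^ (1 / p) ≤
      C * ⨆ φ : {φ : StrongDual 𝕜 X // ‖φ‖ ≤ 1}, (∑ j, ‖φ.1 (z j)‖ ^ p) ^ (1 / p)

/-- The `p`-summing norm `π_p(u)`: the least admissible constant. -/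
def piNorm (𝕜 : Type*) [RCLike 𝕜] {X Y : Type*} [NormedAddCommGroup X]
    [NormedSpace 𝕜 X] [NormedAddCommGroup Y] [NormedSpace 𝕜 Y] (p : ℝ)
    (u : X →L[𝕜] Y) : ℝ :=
  sInf {C : ℝ | 0 < C ∧ ∀ (k : ℕ) (z : Fin k → X),
    (∑ j, ‖u (z j)‖ ^ p) ^ (1 / p) ≤
      C * ⨆ φ : {φ : StrongDual 𝕜 X // ‖φ‖ ≤ 1}, (∑ j, ‖φ.1 (z j)‖ ^ p) ^ (1 / p)}

variable {𝕜 E F : Type*}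
section Helpers

open Finset

variable {𝕜 E : Type*} [RCLike 𝕜] [NormedAddCommGroup E] [NormedSpace 𝕜 E]

private lemma aux_rpow_le_one {X s : ℝ} (hs : 0 < s) (hX : 0 ≤ X)
    (h : X ^ (1 / s) ≤ 1) : X ≤ 1 := by
  have h2 := Real.rpow_le_rpow (Real.rpow_nonneg hX _) h hs.le
  rwa [one_div, Real.rpow_inv_rpow hX hs.ne', Real.one_rpow] at h2

/-- `ℓ_p ⊆ ℓ_s` on finite sums. -/
private lemma aux_sum_rpow_le {ι : Type*} {F : Finset ι} {h : ι → ℝ} (hh : ∀ i, 0 ≤ h i)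
    {p s : ℝ} (hp : 0 < p) (hps : p ≤ s) :
    ∑ i ∈ F, h i ^ s ≤ (∑ i ∈ F, h i ^ p) ^ (s / p) := by
  set S := ∑ i ∈ F, h i ^ p with hS
  have hS0 : 0 ≤ S := sum_nonneg fun i _ => Real.rpow_nonneg (hh i) p
  have hkey : ∀ i ∈ F, h i ^ s ≤ h i ^ p * S ^ ((s - p) / p) := by
    intro i hi
    have h1 : h i ^ s = h i ^ p * h i ^ (s - p) := by
      rw [← Real.rpow_add_of_nonneg (hh i) hp.le (by linarith)]
      norm_num
    rw [h1]
    refine mul_le_mul_of_nonneg_left ?_ (Real.rpow_nonneg (hh i) p)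
    have h2 : h i ≤ S ^ (1 / p) := by
      have h3 : h i ^ p ≤ S := single_le_sum (fun j _ => Real.rpow_nonneg (hh j) p) hi
      calc h i = (h i ^ p) ^ (1 / p) := by
            rw [one_div, Real.rpow_rpow_inv (hh i) hp.ne']
        _ ≤ S ^ (1 / p) := Real.rpow_le_rpow (Real.rpow_nonneg (hh i) p) h3
            (one_div_nonneg.2 hp.le)
    calc h i ^ (s - p) ≤ (S ^ (1 / p)) ^ (s - p) := Real.rpow_le_rpow (hh i) h2 (by linarith)
      _ = S ^ ((s - p) / p) := by rw [← Real.rpow_mul hS0]; congr 1; field_simp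
  calc ∑ i ∈ F, h i ^ s ≤ ∑ i ∈ F, h i ^ p * S ^ ((s - p) / p) := sum_le_sum hkey
    _ = S * S ^ ((s - p) / p) := by rw [← sum_mul]
    _ = S ^ ((1 : ℝ)) * S ^ ((s - p) / p) := by rw [Real.rpow_one]
    _ = S ^ (1 + (s - p) / p) :=
        (Real.rpow_add_of_nonneg hS0 zero_le_one (div_nonneg (by linarith) hp.le)).symm
    _ = S ^ (s / p) := by congr 1; field_simp; ring

private lemma aux_rpow_sum_le_card {ι : Type*} (F : Finset ι) (w : ι → ℝ) (hw : ∀ i, 0 ≤ w i)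
    {κ : ℝ} (hκ : 0 < κ) :
    (∑ i ∈ F, w i) ^ κ ≤ (F.card : ℝ) ^ κ * ∑ i ∈ F, w i ^ κ := by
  rcases F.eq_empty_or_nonempty with rfl | hne
  · simp [Real.zero_rpow hκ.ne']
  obtain ⟨b, hb, hmax⟩ := F.exists_max_image w hne
  have h1 : ∑ i ∈ F, w i ≤ (F.card : ℝ) * w b := by
    calc ∑ i ∈ F, w i ≤ ∑ _i ∈ F, w b := sum_le_sum fun i hi => hmax i hi
      _ = F.card * w b := by rw [sum_const, nsmul_eq_mul]
  calc (∑ i ∈ F, w i) ^ κ ≤ ((F.card : ℝ) * w b) ^ κ :=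
        Real.rpow_le_rpow (sum_nonneg fun i _ => hw i) h1 hκ.le
    _ = (F.card : ℝ) ^ κ * w b ^ κ := Real.mul_rpow (by positivity) (hw b)
    _ ≤ (F.card : ℝ) ^ κ * ∑ i ∈ F, w i ^ κ := by
        refine mul_le_mul_of_nonneg_left ?_ (by positivity)
        exact single_le_sum (fun i _ => Real.rpow_nonneg (hw i) κ) hb

private lemma WeaklySummable.inner_summable {s : ℝ} {xs : ℕ → StrongDual 𝕜 E}
    (h : WeaklySummable 𝕜 s xs) (z : E) : Summable fun n => ‖xs n z‖ ^ s := by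
  have h2 := h (inclusionInDoubleDual 𝕜 E z)
  simpa only [NormedSpace.dual_def] using h2

/-- Banach–Steinhaus for a sequence of functionals on a Banach space. -/
private lemma weak_bidual_bound_aux {Y : Type*} [NormedAddCommGroup Y] [NormedSpace 𝕜 Y]
    [CompleteSpace Y] {s : ℝ} (hs : 1 ≤ s) (v : ℕ → Y →L[𝕜] 𝕜)
    (h : ∀ Φ : Y, Summable fun n => ‖v n Φ‖ ^ s) :
    ∃ A : ℝ, 0 ≤ A ∧ ∀ Φ : Y, ∑' n, ‖v n Φ‖ ^ s ≤ A * ‖Φ‖ ^ s := by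
  classical
  have hs0 : (0 : ℝ) < s := zero_lt_one.trans_le hs
  set sp := ENNReal.ofReal s with hsp
  have htr : sp.toReal = s := ENNReal.toReal_ofReal hs0.le
  have htr0 : 0 < sp.toReal := by rw [htr]; exact hs0
  haveI : Fact (1 ≤ sp) := ⟨ENNReal.one_le_ofReal.2 hs⟩
  have hsadd : ∀ (i : ℕ) (a b : 𝕜),
      lp.single (E := fun _ : ℕ => 𝕜) sp i (a + b) =
        lp.single sp i a + lp.single sp i b := by
    intro i a b
    refine lp.ext (funext fun j => ?_)
    rcases eq_or_ne j i with rfl | hj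
    · simp [lp.single_apply_self]
    · simp [lp.single_apply_ne _ _ _ hj]
  let gl : ∀ _N : ℕ, Y →ₗ[𝕜] lp (fun _ : ℕ => 𝕜) sp := fun N =>
    { toFun := fun Φ => ∑ i ∈ Finset.range N, lp.single sp i (v i Φ)
      map_add' := fun Φ Ψ => by
        simp only [map_add]
        rw [← Finset.sum_add_distrib]
        exact Finset.sum_congr rfl fun i _ => hsadd i _ _
      map_smul' := fun c Φ => by
        simp only [_root_.map_smul, RingHom.id_apply, Finset.smul_sum]
        exact Finset.sum_congr rfl fun i _ => lp.single_smul sp i c _ }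
  have hnormpow : ∀ (N : ℕ) (Φ : Y),
      ‖gl N Φ‖ ^ s = ∑ i ∈ Finset.range N, ‖v i Φ‖ ^ s := by
    intro N Φ
    have h1 := lp.norm_sum_single (E := fun _ : ℕ => 𝕜) htr0 (fun i => v i Φ) (Finset.range N)
    rw [htr] at h1
    exact h1
  have hnorm : ∀ (N : ℕ) (Φ : Y),
      ‖gl N Φ‖ = (∑ i ∈ Finset.range N, ‖v i Φ‖ ^ s) ^ (1 / s) := by
    intro N Φ
    rw [← hnormpow N Φ, one_div, Real.rpow_rpow_inv (norm_nonneg _) hs0.ne']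
  have hbound : ∀ N Φ, ‖gl N Φ‖ ≤ (∑ i ∈ Finset.range N, ‖v i‖ ^ s) ^ (1 / s) * ‖Φ‖ := by
    intro N Φ
    rw [hnorm]
    have h1 : ∀ i, ‖v i Φ‖ ^ s ≤ ‖Φ‖ ^ s * ‖v i‖ ^ s := by
      intro i
      rw [← Real.mul_rpow (norm_nonneg Φ) (norm_nonneg (v i)), mul_comm ‖Φ‖]
      exact Real.rpow_le_rpow (norm_nonneg _) ((v i).le_opNorm _) hs0.le
    calc (∑ i ∈ Finset.range N, ‖v i Φ‖ ^ s) ^ (1 / s)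
        ≤ (∑ i ∈ Finset.range N, ‖Φ‖ ^ s * ‖v i‖ ^ s) ^ (1 / s) :=
          Real.rpow_le_rpow (sum_nonneg fun i _ => Real.rpow_nonneg (norm_nonneg _) s)
            (sum_le_sum fun i _ => h1 i) (one_div_nonneg.2 hs0.le)
      _ = (‖Φ‖ ^ s * ∑ i ∈ Finset.range N, ‖v i‖ ^ s) ^ (1 / s) := by rw [← Finset.mul_sum]
      _ = (‖Φ‖ ^ s) ^ (1 / s) * (∑ i ∈ Finset.range N, ‖v i‖ ^ s) ^ (1 / s) :=
          Real.mul_rpow (by positivity)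
            (sum_nonneg fun i _ => Real.rpow_nonneg (norm_nonneg _) s)
      _ = (∑ i ∈ Finset.range N, ‖v i‖ ^ s) ^ (1 / s) * ‖Φ‖ := by
          rw [one_div, Real.rpow_rpow_inv (norm_nonneg Φ) hs0.ne', mul_comm]
  let g : ℕ → Y →L[𝕜] lp (fun _ : ℕ => 𝕜) sp :=
    fun N => LinearMap.mkContinuous (gl N) _ (hbound N)
  have hpt : ∀ Φ : Y, ∃ C, ∀ N, ‖g N Φ‖ ≤ C := by
    intro Φ
    refine ⟨(∑' n, ‖v n Φ‖ ^ s) ^ (1 / s), fun N => ?_⟩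
    have hgN : ‖g N Φ‖ = (∑ i ∈ Finset.range N, ‖v i Φ‖ ^ s) ^ (1 / s) := hnorm N Φ
    rw [hgN]
    refine Real.rpow_le_rpow (sum_nonneg fun i _ => Real.rpow_nonneg (norm_nonneg _) s) ?_
      (one_div_nonneg.2 hs0.le)
    exact Summable.sum_le_tsum (range N) (fun i _ => Real.rpow_nonneg (norm_nonneg _) s) (h Φ)
  obtain ⟨C, hC⟩ := banach_steinhaus (g := g) hpt
  have hC0 : 0 ≤ C := le_trans (norm_nonneg _) (hC 0)
  refine ⟨C ^ s, Real.rpow_nonneg hC0 s, fun Φ => ?_⟩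
  have hfin : ∀ N : ℕ, ∑ i ∈ range N, ‖v i Φ‖ ^ s ≤ C ^ s * ‖Φ‖ ^ s := by
    intro N
    have h1 : ‖g N Φ‖ ≤ C * ‖Φ‖ := (g N).le_of_opNorm_le (hC N) Φ
    have h2 : (∑ i ∈ Finset.range N, ‖v i Φ‖ ^ s) ^ (1 / s) ≤ C * ‖Φ‖ := by
      rw [← hnorm N Φ]; exact h1
    have h3 := Real.rpow_le_rpow (Real.rpow_nonneg
      (sum_nonneg fun i _ => Real.rpow_nonneg (norm_nonneg _) s) _) h2 hs0.le
    rwa [one_div, Real.rpow_inv_rpow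
        (sum_nonneg fun i _ => Real.rpow_nonneg (norm_nonneg _) s) hs0.ne',
      Real.mul_rpow hC0 (norm_nonneg _)] at h3
  exact Summable.tsum_le_of_sum_range_le (h Φ) hfin

/-- Banach–Steinhaus: a weakly `s`-summable sequence has uniformly bounded weak sums. -/
private lemma weak_bidual_bound {s : ℝ} (hs : 1 ≤ s) {xs : ℕ → StrongDual 𝕜 E}
    (h : WeaklySummable 𝕜 s xs) :
    ∃ A : ℝ, 0 ≤ A ∧ ∀ Φ : StrongDual 𝕜 (StrongDual 𝕜 E), ∑' n, ‖Φ (xs n)‖ ^ s ≤ A * ‖Φ‖ ^ s := by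
  let v := fun n =>  LinearMap.mkContinuous (E := StrongDual 𝕜 (StrongDual 𝕜 E))
      ({ toFun := fun Φ => Φ (xs n), map_add' := fun _ _ => rfl, map_smul' := fun _ _ => rfl } :
        StrongDual 𝕜 (StrongDual 𝕜 E) →ₗ[𝕜] 𝕜)
      ‖xs n‖ (fun Φ => by rw [mul_comm]; exact Φ.le_opNorm _)
  have := weak_bidual_bound_aux (𝕜 := 𝕜) (Y := StrongDual 𝕜 (StrongDual 𝕜 E)) hs v (fun Φ => by
    simpa only [v, LinearMap.mkContinuous_apply, LinearMap.coe_mk, AddHom.coe_mk] using h Φ)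
  obtain ⟨A, hA0, hA⟩ := this
  exact ⟨A, hA0, fun Φ => hA Φ⟩

/-- From the unit-ball bound to the scaled bound. -/
private lemma scale_bound {p : ℝ} (hp : 0 < p) {ys : ℕ → StrongDual 𝕜 E}
    (h : ∀ Φ : StrongDual 𝕜 (StrongDual 𝕜 E), ‖Φ‖ ≤ 1 → ∑' n, ‖Φ (ys n)‖ ^ p ≤ 1) :
    ∀ Φ : StrongDual 𝕜 (StrongDual 𝕜 E), ∑' n, ‖Φ (ys n)‖ ^ p ≤ ‖Φ‖ ^ p := by
  intro Φ
  rcases eq_or_ne Φ 0 with rfl | hΦ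
  · simp [Real.zero_rpow hp.ne']
    exact Real.rpow_nonneg (norm_nonneg (0 : StrongDual 𝕜 (StrongDual 𝕜 E))) p
  · have hn : 0 < ‖Φ‖ := by
      rcases (norm_nonneg Φ).eq_or_lt with h0 | h0
      · exact absurd ((ContinuousLinearMap.opNorm_zero_iff _).1 h0.symm) hΦ
      · exact h0
    set c : 𝕜 := ((‖Φ‖ : ℝ) : 𝕜)⁻¹ with hcdef
    have hc : ‖c‖ = ‖Φ‖⁻¹ := by
      rw [hcdef, norm_inv, RCLike.norm_ofReal, abs_of_nonneg hn.le]
    have h1 := h (c • Φ) ((ContinuousLinearMap.opNorm_smul_le c Φ).trans (by rw [hc, inv_mul_cancel₀ hn.ne']))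
    have h2 : ∀ n, ‖(c • Φ) (ys n)‖ ^ p = (‖Φ‖ ^ p)⁻¹ * ‖Φ (ys n)‖ ^ p := by
      intro n
      rw [ContinuousLinearMap.smul_apply, norm_smul, hc,
        Real.mul_rpow (by positivity) (norm_nonneg _), ← Real.inv_rpow hn.le]
    rw [tsum_congr h2, tsum_mul_left] at h1
    have hpow : 0 < ‖Φ‖ ^ p := Real.rpow_pos_of_pos hn p
    rw [inv_mul_le_iff₀ hpow, mul_one] at h1
    exact h1

/-- Unit ball of `ℓ_p^w` gives honest pointwise bounds. -/
private lemma unit_ball_bound {p : ℝ} (hp : 1 ≤ p) {ys : ℕ → StrongDual 𝕜 E}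
    (hW : WeaklySummable 𝕜 p ys) (hN : weakNorm 𝕜 p ys ≤ 1) :
    ∀ Φ : StrongDual 𝕜 (StrongDual 𝕜 E), ‖Φ‖ ≤ 1 → ∑' n, ‖Φ (ys n)‖ ^ p ≤ 1 := by
  intro Φ hΦ
  have hp0 : (0 : ℝ) < p := zero_lt_one.trans_le hp
  obtain ⟨A, hA0, hA⟩ := weak_bidual_bound hp hW
  have hbdd : BddAbove (Set.range fun φ : {φ : StrongDual 𝕜 (StrongDual 𝕜 E) // ‖φ‖ ≤ 1} =>
      (∑' j, ‖φ.1 (ys j)‖ ^ p) ^ (1 / p)) := by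
    refine ⟨A ^ (1 / p), Set.forall_mem_range.2 fun φ => ?_⟩
    have h1 : ∑' j, ‖φ.1 (ys j)‖ ^ p ≤ A := by
      have h2 : ‖φ.1‖ ^ p ≤ 1 := Real.rpow_le_one (norm_nonneg φ.1) φ.2 hp0.le
      calc ∑' j, ‖φ.1 (ys j)‖ ^ p ≤ A * ‖φ.1‖ ^ p := hA φ.1
        _ ≤ A * 1 := mul_le_mul_of_nonneg_left h2 hA0
        _ = A := mul_one A
    exact Real.rpow_le_rpow (tsum_nonneg fun n => Real.rpow_nonneg (norm_nonneg _) p) h1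
      (one_div_nonneg.2 hp0.le)
  have hle : (∑' j, ‖Φ (ys j)‖ ^ p) ^ (1 / p) ≤ 1 := by
    have h4 := le_ciSup hbdd (⟨Φ, hΦ⟩ : {φ : StrongDual 𝕜 (StrongDual 𝕜 E) // ‖φ‖ ≤ 1})
    refine le_trans h4 ?_
    rw [weakNorm] at hN
    exact hN
  exact aux_rpow_le_one hp0 (tsum_nonneg fun n => Real.rpow_nonneg (norm_nonneg _) p) hle

end Helpers
section Helpers2

open Finset

variable {𝕜 E : Type*} [RCLike 𝕜] [NormedAddCommGroup E] [NormedSpace 𝕜 E]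

set_option maxHeartbeats 1000000 in
/-- Gliding hump: a mid `(q,p)`-summable sequence has a uniform bound over the unit ball
of `ℓ_p^w`. -/
private lemma mid_uniform_bound {q p : ℝ} (hq : 1 ≤ q) (hp : 1 ≤ p) {x : ℕ → E}
    (hx : MidSummable 𝕜 q p x) :
    ∃ M : ℝ, 0 ≤ M ∧ ∀ ys : ℕ → StrongDual 𝕜 E, WeaklySummable 𝕜 p ys →
      (∀ Φ : StrongDual 𝕜 (StrongDual 𝕜 E), ‖Φ‖ ≤ 1 → ∑' n, ‖Φ (ys n)‖ ^ p ≤ 1) →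
      ∑' j, (∑' n, ‖ys n (x j)‖ ^ p) ^ (q / p) ≤ M := by
  have hp0 : (0 : ℝ) < p := zero_lt_one.trans_le hp
  have hq0 : (0 : ℝ) < q := zero_lt_one.trans_le hq
  have hqp0 : 0 ≤ q / p := div_nonneg hq0.le hp0.le
  by_contra hcon
  push_neg at hcon
  have hcon' : ∀ k : ℕ, ∃ ys : ℕ → StrongDual 𝕜 E, WeaklySummable 𝕜 p ys ∧
      (∀ Φ : StrongDual 𝕜 (StrongDual 𝕜 E), ‖Φ‖ ≤ 1 → ∑' n, ‖Φ (ys n)‖ ^ p ≤ 1) ∧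
      ((4 : ℝ) ^ k) ^ q < ∑' j, (∑' n, ‖ys n (x j)‖ ^ p) ^ (q / p) := by
    intro k
    obtain ⟨ys, h1, h2, h3⟩ := hcon (((4 : ℝ) ^ k) ^ q) (by positivity)
    exact ⟨ys, h1, h2, h3⟩
  choose ys hysW hysU hysV using hcon'
  have hB : ∀ k (Φ : StrongDual 𝕜 (StrongDual 𝕜 E)), ∑' n, ‖Φ (ys k n)‖ ^ p ≤ ‖Φ‖ ^ p :=
    fun k => scale_bound hp0 (hysU k)
  set c : ℕ → ℝ := fun k => ((2 : ℝ) ^ k)⁻¹ with hcdef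
  have hc0 : ∀ k, 0 < c k := fun k => by simp only [hcdef]; positivity
  have hcp : ∀ k, c k ^ p = (((2 : ℝ)⁻¹) ^ p) ^ k := by
    intro k
    simp only [hcdef]
    rw [← inv_pow, ← Real.rpow_natCast ((2 : ℝ)⁻¹) k,
      ← Real.rpow_natCast (((2 : ℝ)⁻¹) ^ p) k,
      ← Real.rpow_mul (by norm_num : (0 : ℝ) ≤ 2⁻¹),
      ← Real.rpow_mul (by norm_num : (0 : ℝ) ≤ 2⁻¹), mul_comm]
  have hgeo : Summable fun k => c k ^ p := by
    refine Summable.congr (f := fun k => (((2 : ℝ)⁻¹) ^ p) ^ k) ?_ fun k => (hcp k).symm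
    exact summable_geometric_of_lt_one (by positivity)
      (Real.rpow_lt_one (by norm_num) (by norm_num) hp0)
  set w : ℕ × ℕ → StrongDual 𝕜 E := fun kn => ((c kn.1 : ℝ) : 𝕜) • ys kn.1 kn.2 with hwdef
  have hwnorm : ∀ (k n : ℕ) (Φ : StrongDual 𝕜 (StrongDual 𝕜 E)),
      ‖Φ (w (k, n))‖ ^ p = c k ^ p * ‖Φ (ys k n)‖ ^ p := by
    intro k n Φ
    simp only [hwdef, _root_.map_smul, norm_smul, RCLike.norm_ofReal,
      abs_of_nonneg (hc0 k).le]
    exact Real.mul_rpow (hc0 _).le (norm_nonneg _)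
  have hwx2 : ∀ (k n : ℕ) (j : ℕ),
      ‖w (k, n) (x j)‖ ^ p = c k ^ p * ‖ys k n (x j)‖ ^ p := by
    intro k n j
    simp only [hwdef, ContinuousLinearMap.smul_apply, norm_smul, RCLike.norm_ofReal,
      abs_of_nonneg (hc0 k).le]
    exact Real.mul_rpow (hc0 _).le (norm_nonneg _)
  have hprodsum : ∀ Φ : StrongDual 𝕜 (StrongDual 𝕜 E), Summable fun kn : ℕ × ℕ => ‖Φ (w kn)‖ ^ p := by
    intro Φ
    refine (summable_prod_of_nonneg fun kn => Real.rpow_nonneg (norm_nonneg _) p).2 ⟨?_, ?_⟩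
    · intro k
      exact ((hysW k Φ).mul_left (c k ^ p)).congr fun n => (hwnorm k n Φ).symm
    · refine Summable.of_nonneg_of_le
        (fun k => tsum_nonneg fun n => Real.rpow_nonneg (norm_nonneg _) p) ?_
        (hgeo.mul_right (‖Φ‖ ^ p))
      intro k
      have h5 : ∑' n, ‖Φ (w (k, n))‖ ^ p = c k ^ p * ∑' n, ‖Φ (ys k n)‖ ^ p := by
        rw [tsum_congr (fun n => hwnorm k n Φ), tsum_mul_left]
      rw [h5]
      exact mul_le_mul_of_nonneg_left (hB k Φ) (Real.rpow_nonneg (hc0 k).le p)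
  set eqv : ℕ ≃ ℕ × ℕ := (Denumerable.eqv (ℕ × ℕ)).symm with heqv
  set z : ℕ → StrongDual 𝕜 E := fun m => w (eqv m) with hzdef
  have hzW : WeaklySummable 𝕜 p z := by
    intro Φ
    exact (eqv.summable_iff (f := fun kn : ℕ × ℕ => ‖Φ (w kn)‖ ^ p)).2 (hprodsum Φ)
  have hxz := hx z hzW
  have hwx : ∀ j, Summable fun kn : ℕ × ℕ => ‖w kn (x j)‖ ^ p := by
    intro j
    have h5 := hprodsum (inclusionInDoubleDual 𝕜 E (x j))
    simpa only [NormedSpace.dual_def] using h5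
  have hrow : ∀ j k, Summable fun n => ‖w (k, n) (x j)‖ ^ p := by
    intro j k
    exact (((hysW k).inner_summable (x j)).mul_left (c k ^ p)).congr
      fun n => (hwx2 k n j).symm
  set σ : ℕ → ℝ := fun j => ∑' m, ‖z m (x j)‖ ^ p with hσdef
  have hσeq : ∀ j, σ j = ∑' (k) (n), ‖w (k, n) (x j)‖ ^ p := by
    intro j
    calc σ j = ∑' kn : ℕ × ℕ, ‖w kn (x j)‖ ^ p := by
          simp only [hσdef, hzdef]
          exact eqv.tsum_eq (fun kn : ℕ × ℕ => ‖w kn (x j)‖ ^ p)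
      _ = ∑' (k) (n), ‖w (k, n) (x j)‖ ^ p := Summable.tsum_prod' (hwx j) (hrow j)
  have hblock : ∀ j k, c k ^ p * (∑' n, ‖ys k n (x j)‖ ^ p) ≤ σ j := by
    intro j k
    rw [hσeq j]
    have hrowsum : Summable fun k' => ∑' n, ‖w (k', n) (x j)‖ ^ p :=
      ((summable_prod_of_nonneg fun kn => Real.rpow_nonneg (norm_nonneg _) p).1 (hwx j)).2
    have h5 : ∑' n, ‖w (k, n) (x j)‖ ^ p = c k ^ p * ∑' n, ‖ys k n (x j)‖ ^ p := by
      rw [tsum_congr (fun n => hwx2 k n j), tsum_mul_left]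
    rw [← h5]
    exact Summable.le_tsum hrowsum k
      (fun k' _ => tsum_nonneg fun n => Real.rpow_nonneg (norm_nonneg _) p)
  set T := ∑' j, σ j ^ (q / p) with hTdef
  have hT0 : 0 ≤ T := tsum_nonneg fun j => Real.rpow_nonneg
    (tsum_nonneg fun m => Real.rpow_nonneg (norm_nonneg _) p) _
  have hσ0 : ∀ j, 0 ≤ σ j := fun j =>
    tsum_nonneg fun m => Real.rpow_nonneg (norm_nonneg _) p
  have hTk : ∀ k, ((2 : ℝ) ^ k) ^ q < T := by
    intro k
    have hVk := hysV k
    have hι0 : ∀ j, 0 ≤ ∑' n, ‖ys k n (x j)‖ ^ p :=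
      fun j => tsum_nonneg fun n => Real.rpow_nonneg (norm_nonneg _) p
    have hsumι : Summable fun j => (∑' n, ‖ys k n (x j)‖ ^ p) ^ (q / p) := hx (ys k) (hysW k)
    have hpq : p * (q / p) = q := by field_simp
    have h6 : ∀ j, c k ^ q * (∑' n, ‖ys k n (x j)‖ ^ p) ^ (q / p) ≤ σ j ^ (q / p) := by
      intro j
      have h7 : (c k ^ p * ∑' n, ‖ys k n (x j)‖ ^ p) ^ (q / p)
          = c k ^ q * (∑' n, ‖ys k n (x j)‖ ^ p) ^ (q / p) := by
        rw [Real.mul_rpow (Real.rpow_nonneg (hc0 k).le p) (hι0 j),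
          ← Real.rpow_mul (hc0 k).le, hpq]
      rw [← h7]
      exact Real.rpow_le_rpow
        (mul_nonneg (Real.rpow_nonneg (hc0 k).le p) (hι0 j)) (hblock j k) hqp0
    have h8 : c k ^ q * ∑' j, (∑' n, ‖ys k n (x j)‖ ^ p) ^ (q / p) ≤ T := by
      rw [hTdef, ← tsum_mul_left]
      exact Summable.tsum_le_tsum h6 (hsumι.mul_left _) hxz
    have h9 : ((2 : ℝ) ^ k) ^ q = c k ^ q * ((4 : ℝ) ^ k) ^ q := by
      rw [← Real.mul_rpow (hc0 k).le (by positivity)]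
      congr 1
      simp only [hcdef]
      rw [show (4 : ℝ) = 2 * 2 by norm_num, mul_pow]
      field_simp
    calc ((2 : ℝ) ^ k) ^ q = c k ^ q * ((4 : ℝ) ^ k) ^ q := h9
      _ < c k ^ q * ∑' j, (∑' n, ‖ys k n (x j)‖ ^ p) ^ (q / p) :=
          mul_lt_mul_of_pos_left hVk (Real.rpow_pos_of_pos (hc0 k) q)
      _ ≤ T := h8
  obtain ⟨k, hk⟩ := pow_unbounded_of_one_lt (T ^ (1 / q)) (one_lt_two (α := ℝ))
  have h10 : T < ((2 : ℝ) ^ k) ^ q := by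
    have h11 := Real.rpow_lt_rpow (Real.rpow_nonneg hT0 _) hk hq0
    rwa [one_div, Real.rpow_inv_rpow hT0 hq0.ne'] at h11
  exact absurd (hTk k) (not_lt.2 h10.le)

end Helpers2
section Helpers3

open Finset

variable {𝕜 E : Type*} [RCLike 𝕜] [NormedAddCommGroup E] [NormedSpace 𝕜 E]

set_option maxHeartbeats 1600000 in
/-- The main inequality: finite `(q/p)`-power sums of the weak-`s` inner sums are controlled by
the mid `(q,p)` data. -/
private lemma main_bound {q p s : ℝ} (hq : 1 ≤ q) (hqp : q ≤ p) (hps : p ≤ s)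
    {x : ℕ → E} (hx : MidSummable 𝕜 q p x)
    {xs : ℕ → StrongDual 𝕜 E} (hxs : WeaklySummable 𝕜 s xs)
    (hA : ∀ Φ : StrongDual 𝕜 (StrongDual 𝕜 E), ‖Φ‖ ≤ 1 → ∑' n, ‖Φ (xs n)‖ ^ s ≤ 1)
    {M : ℝ} (hM0 : 0 ≤ M)
    (hM : ∀ ys : ℕ → StrongDual 𝕜 E, WeaklySummable 𝕜 p ys →
        (∀ Φ : StrongDual 𝕜 (StrongDual 𝕜 E), ‖Φ‖ ≤ 1 → ∑' n, ‖Φ (ys n)‖ ^ p ≤ 1) →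
        ∑' j, (∑' n, ‖ys n (x j)‖ ^ p) ^ (q / p) ≤ M)
    (F : Finset ℕ) :
    ∑ j ∈ F, (∑' n, ‖xs n (x j)‖ ^ s) ^ (q / p) ≤ M ^ (s / p) := by
  classical
  have hq0 : (0 : ℝ) < q := zero_lt_one.trans_le hq
  have hp0 : (0 : ℝ) < p := hq0.trans_le hqp
  have hs0 : (0 : ℝ) < s := hp0.trans_le hps
  have hqp0 : 0 ≤ q / p := div_nonneg hq0.le hp0.le
  -- the case s = p
  rcases eq_or_lt_of_le hps with hsp | hsp
  · subst hsp
    rw [div_self hp0.ne', Real.rpow_one]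
    refine le_trans (Summable.sum_le_tsum F (fun j _ => Real.rpow_nonneg
      (tsum_nonneg fun n => Real.rpow_nonneg (norm_nonneg _) _) _) (hx xs hxs)) ?_
    exact hM xs hxs hA
  -- now p < s
  have hsp' : 0 < s - p := sub_pos.2 hsp
  set a : ℕ → ℕ → ℝ := fun j n => ‖xs n (x j)‖ with hadef
  have ha0 : ∀ j n, 0 ≤ a j n := fun j n => norm_nonneg _
  have haS : ∀ j, Summable fun n => a j n ^ s := fun j => hxs.inner_summable (x j)
  set cc : ℕ → ℝ := fun j => ∑' n, a j n ^ s with hccdef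
  have hcc0 : ∀ j, 0 ≤ cc j := fun j => tsum_nonneg fun n => Real.rpow_nonneg (ha0 j n) s
  set b : ℕ → ℝ := fun j => cc j ^ (1 / s) with hbdef
  have hb0 : ∀ j, 0 ≤ b j := fun j => Real.rpow_nonneg (hcc0 j) _
  set hh : ℕ → ℕ → ℝ := fun j n => b j ^ ((q - p) / p) * a j n with hhdef
  have hh0 : ∀ j n, 0 ≤ hh j n :=
    fun j n => mul_nonneg (Real.rpow_nonneg (hb0 j) _) (ha0 j n)
  have hhs : ∀ j n, hh j n ^ s = b j ^ ((q - p) * s / p) * a j n ^ s := by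
    intro j n
    simp only [hhdef]
    rw [Real.mul_rpow (Real.rpow_nonneg (hb0 j) _) (ha0 j n), ← Real.rpow_mul (hb0 j)]
    congr 2
    ring
  have hhp : ∀ j n, hh j n ^ p = b j ^ (q - p) * a j n ^ p := by
    intro j n
    simp only [hhdef]
    rw [Real.mul_rpow (Real.rpow_nonneg (hb0 j) _) (ha0 j n), ← Real.rpow_mul (hb0 j),
      div_mul_cancel₀ _ hp0.ne']
  have hhsum : ∀ j, Summable fun n => hh j n ^ s :=
    fun j => ((haS j).mul_left (b j ^ ((q - p) * s / p))).congr fun n => (hhs j n).symm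
  have key1 : ∀ j, cc j ^ (q / p) = ∑' n, hh j n ^ s := by
    intro j
    have h1 : ∑' n, hh j n ^ s = b j ^ ((q - p) * s / p) * cc j := by
      rw [tsum_congr (hhs j)]
      exact tsum_mul_left
    rw [h1]
    rcases eq_or_lt_of_le (hcc0 j) with hcj | hcj
    · rw [← hcj, mul_zero, Real.zero_rpow (ne_of_gt (div_pos hq0 hp0))]
    · have he : (1 / s) * ((q - p) * s / p) + 1 = q / p := by field_simp <;> ring
      calc cc j ^ (q / p) = cc j ^ ((1 / s) * ((q - p) * s / p) + 1) := by rw [he]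
        _ = cc j ^ ((1 / s) * ((q - p) * s / p)) * cc j ^ (1 : ℝ) := Real.rpow_add hcj _ _
        _ = b j ^ ((q - p) * s / p) * cc j := by
            rw [Real.rpow_one]
            congr 1
            rw [hbdef]
            exact Real.rpow_mul (hcc0 j) _ _
  set G : ℕ → ℝ := fun n => ∑ j ∈ F, hh j n ^ p with hGdef
  have hG0 : ∀ n, 0 ≤ G n :=
    fun n => sum_nonneg fun j _ => Real.rpow_nonneg (hh0 j n) p
  have hGs : Summable fun n => G n ^ (s / p) := by
    have hsp0 : 0 < s / p := div_pos hs0 hp0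
    refine Summable.of_nonneg_of_le (fun n => Real.rpow_nonneg (hG0 n) _) ?_
      (((summable_sum (fun j (_ : j ∈ F) => hhsum j)).mul_left ((F.card : ℝ) ^ (s / p))))
    intro n
    have h2 : ∀ j, (hh j n ^ p) ^ (s / p) = hh j n ^ s := by
      intro j
      rw [← Real.rpow_mul (hh0 j n), mul_div_cancel₀ _ hp0.ne']
    calc G n ^ (s / p) ≤ (F.card : ℝ) ^ (s / p) * ∑ j ∈ F, (hh j n ^ p) ^ (s / p) :=
          aux_rpow_sum_le_card F _ (fun j => Real.rpow_nonneg (hh0 j n) p) hsp0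
      _ = (F.card : ℝ) ^ (s / p) * ∑ j ∈ F, hh j n ^ s := by
          rw [Finset.sum_congr rfl fun j _ => h2 j]
  set V := ∑' n, G n ^ (s / p) with hVdef
  have hV0 : 0 ≤ V := tsum_nonneg fun n => Real.rpow_nonneg (hG0 n) _
  have step1 : ∑ j ∈ F, cc j ^ (q / p) ≤ V := by
    calc ∑ j ∈ F, cc j ^ (q / p) = ∑ j ∈ F, ∑' n, hh j n ^ s :=
          Finset.sum_congr rfl fun j _ => key1 j
      _ = ∑' n, ∑ j ∈ F, hh j n ^ s := (Summable.tsum_finsetSum fun j _ => hhsum j).symm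
      _ ≤ ∑' n, G n ^ (s / p) := by
          refine Summable.tsum_le_tsum (fun n => ?_) (summable_sum fun j _ => hhsum j) hGs
          exact aux_sum_rpow_le (fun j => hh0 j n) hp0 hps
  rcases eq_or_lt_of_le hV0 with hVz | hVpos
  · calc ∑ j ∈ F, cc j ^ (q / p) ≤ V := step1
      _ = 0 := hVz.symm
      _ ≤ M ^ (s / p) := Real.rpow_nonneg hM0 _
  · -- the Hölder machinery
    have hconj : Real.HolderConjugate (s / (s - p)) (s / p) := by
      constructor
      · rw [inv_one, inv_div, inv_div, ← add_div, sub_add_cancel, div_self hs0.ne']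
      · exact div_pos hs0 hsp'
      · exact div_pos hs0 hp0
    set Z := V ^ ((s - p) / s) with hZdef
    have hZ0 : 0 < Z := Real.rpow_pos_of_pos hVpos _
    set μ : ℕ → ℝ := fun n => G n ^ ((s - p) / p) / Z with hμdef
    have hμ0 : ∀ n, 0 ≤ μ n :=
      fun n => div_nonneg (Real.rpow_nonneg (hG0 n) _) hZ0.le
    have hμv : ∀ n, μ n ^ (s / (s - p)) = G n ^ (s / p) / V := by
      intro n
      have e1 : (s - p) / p * (s / (s - p)) = s / p := by field_simp <;> ring
      have e2 : (s - p) / s * (s / (s - p)) = 1 := by field_simp <;> ring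
      simp only [hμdef]
      rw [Real.div_rpow (Real.rpow_nonneg (hG0 n) _) hZ0.le, ← Real.rpow_mul (hG0 n), e1,
        hZdef, ← Real.rpow_mul hVpos.le, e2, Real.rpow_one]
    have hμsum : Summable fun n => μ n ^ (s / (s - p)) :=
      (hGs.div_const V).congr fun n => (hμv n).symm
    have hμtsum : ∑' n, μ n ^ (s / (s - p)) = 1 := by
      rw [tsum_congr hμv, tsum_div_const, ← hVdef, div_self hVpos.ne']
    have holder : ∀ g : ℕ → ℝ, (∀ n, 0 ≤ g n) → (Summable fun n => g n ^ (s / p)) →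
        (Summable fun n => μ n * g n) ∧
          ∑' n, μ n * g n ≤ (∑' n, g n ^ (s / p)) ^ (p / s) := by
      intro g hg hgs
      obtain ⟨h1, h2⟩ := Real.summable_and_inner_le_Lp_mul_Lq_tsum_of_nonneg hconj hμ0 hg hμsum hgs
      refine ⟨h1, h2.trans_eq ?_⟩
      rw [hμtsum, Real.one_rpow, one_mul, one_div_div]
    have hexp : ∀ t : ℝ, 0 ≤ t → (t ^ p) ^ (s / p) = t ^ s := by
      intro t ht
      rw [← Real.rpow_mul ht, mul_div_cancel₀ _ hp0.ne']
    set ys : ℕ → StrongDual 𝕜 E := fun n => ((μ n ^ (1 / p) : ℝ) : 𝕜) • xs n with hysdef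
    have hcoeff : ∀ n, ‖((μ n ^ (1 / p) : ℝ) : 𝕜)‖ = μ n ^ (1 / p) := fun n => by
      rw [RCLike.norm_ofReal, abs_of_nonneg (Real.rpow_nonneg (hμ0 n) _)]
    have hcoeffp : ∀ (n : ℕ) (t : ℝ), 0 ≤ t → (μ n ^ (1 / p) * t) ^ p = μ n * t ^ p := by
      intro n t ht
      rw [Real.mul_rpow (Real.rpow_nonneg (hμ0 n) _) ht, ← Real.rpow_mul (hμ0 n),
        one_div, inv_mul_cancel₀ hp0.ne', Real.rpow_one]
    have hysx : ∀ j n, ‖ys n (x j)‖ ^ p = μ n * a j n ^ p := by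
      intro j n
      simp only [hysdef, ContinuousLinearMap.smul_apply, norm_smul, hcoeff]
      exact hcoeffp n _ (ha0 j n)
    have hysΦ : ∀ (Φ : StrongDual 𝕜 (StrongDual 𝕜 E)) (n : ℕ),
        ‖Φ (ys n)‖ ^ p = μ n * ‖Φ (xs n)‖ ^ p := by
      intro Φ n
      simp only [hysdef, _root_.map_smul, norm_smul, hcoeff]
      exact hcoeffp n _ (norm_nonneg _)
    have hgsΦ : ∀ Φ : StrongDual 𝕜 (StrongDual 𝕜 E), Summable fun n => (‖Φ (xs n)‖ ^ p) ^ (s / p) :=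
      fun Φ => (hxs Φ).congr fun n => (hexp _ (norm_nonneg _)).symm
    have hysW : WeaklySummable 𝕜 p ys := by
      intro Φ
      exact ((holder _ (fun n => Real.rpow_nonneg (norm_nonneg _) _) (hgsΦ Φ)).1).congr
        fun n => (hysΦ Φ n).symm
    have hysU : ∀ Φ : StrongDual 𝕜 (StrongDual 𝕜 E), ‖Φ‖ ≤ 1 → ∑' n, ‖Φ (ys n)‖ ^ p ≤ 1 := by
      intro Φ hΦ
      have h3 := (holder _ (fun n => Real.rpow_nonneg (norm_nonneg _) _) (hgsΦ Φ)).2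
      have h4 : ∑' n, (‖Φ (xs n)‖ ^ p) ^ (s / p) = ∑' n, ‖Φ (xs n)‖ ^ s :=
        tsum_congr fun n => hexp _ (norm_nonneg _)
      rw [h4] at h3
      calc ∑' n, ‖Φ (ys n)‖ ^ p = ∑' n, μ n * ‖Φ (xs n)‖ ^ p := tsum_congr (hysΦ Φ)
        _ ≤ (∑' n, ‖Φ (xs n)‖ ^ s) ^ (p / s) := h3
        _ ≤ 1 := Real.rpow_le_one
            (tsum_nonneg fun n => Real.rpow_nonneg (norm_nonneg _) s) (hA Φ hΦ)
            (div_nonneg hp0.le hs0.le)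
    set ρ : ℕ → ℝ := fun j => ∑' n, μ n * a j n ^ p with hρdef
    have hρ0 : ∀ j, 0 ≤ ρ j :=
      fun j => tsum_nonneg fun n => mul_nonneg (hμ0 n) (Real.rpow_nonneg (ha0 j n) _)
    have hgsj : ∀ j, Summable fun n => (a j n ^ p) ^ (s / p) :=
      fun j => (haS j).congr fun n => (hexp _ (ha0 j n)).symm
    have hρsum : ∀ j, Summable fun n => μ n * a j n ^ p :=
      fun j => (holder _ (fun n => Real.rpow_nonneg (ha0 j n) _) (hgsj j)).1
    have hρle : ∀ j, ρ j ≤ cc j ^ (p / s) := by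
      intro j
      have h3 := (holder _ (fun n => Real.rpow_nonneg (ha0 j n) _) (hgsj j)).2
      have h4 : ∑' n, (a j n ^ p) ^ (s / p) = cc j :=
        tsum_congr fun n => hexp _ (ha0 j n)
      rw [h4] at h3
      exact h3
    have hμG : ∀ n, μ n * G n = G n ^ (s / p) / Z := by
      intro n
      simp only [hμdef]
      rw [div_mul_eq_mul_div]
      congr 1
      calc G n ^ ((s - p) / p) * G n = G n ^ ((s - p) / p) * G n ^ (1 : ℝ) := by
            rw [Real.rpow_one]
        _ = G n ^ ((s - p) / p + 1) :=
            (Real.rpow_add_of_nonneg (hG0 n) (div_nonneg hsp'.le hp0.le) zero_le_one).symm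
        _ = G n ^ (s / p) := by congr 1; field_simp; ring
    have hVps : V ^ (p / s) = ∑ j ∈ F, b j ^ (q - p) * ρ j := by
      have h5 : V ^ (p / s) = ∑' n, μ n * G n := by
        calc V ^ (p / s) = V ^ (1 - (s - p) / s) := by congr 1; field_simp; ring
          _ = V ^ (1 : ℝ) / V ^ ((s - p) / s) := Real.rpow_sub hVpos _ _
          _ = V / Z := by rw [Real.rpow_one, hZdef]
          _ = ∑' n, μ n * G n := by
              rw [tsum_congr hμG, tsum_div_const]
      rw [h5]
      calc ∑' n, μ n * G n = ∑' n, ∑ j ∈ F, b j ^ (q - p) * (μ n * a j n ^ p) := by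
            refine tsum_congr fun n => ?_
            rw [hGdef, Finset.mul_sum]
            refine Finset.sum_congr rfl fun j _ => ?_
            rw [hhp]
            ring
        _ = ∑ j ∈ F, ∑' n, b j ^ (q - p) * (μ n * a j n ^ p) :=
            Summable.tsum_finsetSum fun j _ => (hρsum j).mul_left _
        _ = ∑ j ∈ F, b j ^ (q - p) * ρ j := Finset.sum_congr rfl fun j _ => tsum_mul_left
    have hper : ∀ j, b j ^ (q - p) * ρ j ≤ ρ j ^ (q / p) := by
      intro j
      rcases eq_or_lt_of_le (hρ0 j) with hρz | hρpos
      · rw [← hρz, mul_zero]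
        exact Real.rpow_nonneg le_rfl _
      · rcases eq_or_lt_of_le (hcc0 j) with hcz | hcpos
        · exfalso
          have h6 := hρle j
          rw [← hcz, Real.zero_rpow (ne_of_gt (div_pos hp0 hs0))] at h6
          linarith
        · have hbj : 0 < b j := Real.rpow_pos_of_pos hcpos _
          have h1 : ρ j ^ ((p - q) / p) ≤ b j ^ (p - q) := by
            calc ρ j ^ ((p - q) / p) ≤ (cc j ^ (p / s)) ^ ((p - q) / p) :=
                  Real.rpow_le_rpow (hρ0 j) (hρle j)
                    (div_nonneg (sub_nonneg.2 hqp) hp0.le)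
              _ = b j ^ (p - q) := by
                  simp only [hbdef]
                  rw [← Real.rpow_mul (hcc0 j), ← Real.rpow_mul (hcc0 j)]
                  congr 1
                  field_simp
          calc b j ^ (q - p) * ρ j
              = b j ^ (q - p) * (ρ j ^ (q / p) * ρ j ^ ((p - q) / p)) := by
                rw [← Real.rpow_add hρpos, (show q / p + (p - q) / p = 1 by field_simp; ring),
                  Real.rpow_one]
            _ ≤ b j ^ (q - p) * (ρ j ^ (q / p) * b j ^ (p - q)) := by
                refine mul_le_mul_of_nonneg_left ?_ (Real.rpow_nonneg (hb0 j) _)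
                exact mul_le_mul_of_nonneg_left h1 (Real.rpow_nonneg (hρ0 j) _)
            _ = ρ j ^ (q / p) * (b j ^ (q - p) * b j ^ (p - q)) := by ring
            _ = ρ j ^ (q / p) := by
                rw [← Real.rpow_add hbj, (show q - p + (p - q) = 0 by ring),
                  Real.rpow_zero, mul_one]
    have hmid : ∑' j, ρ j ^ (q / p) ≤ M := by
      have h7 := hM ys hysW hysU
      have h8 : ∀ j, (∑' n, ‖ys n (x j)‖ ^ p) ^ (q / p) = ρ j ^ (q / p) := by
        intro j
        congr 1
        exact tsum_congr fun n => hysx j n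
      rw [tsum_congr h8] at h7
      exact h7
    have hsummid : Summable fun j => ρ j ^ (q / p) := by
      refine (hx ys hysW).congr fun j => ?_
      congr 1
      exact tsum_congr fun n => hysx j n
    have hVle : V ^ (p / s) ≤ M := by
      rw [hVps]
      calc ∑ j ∈ F, b j ^ (q - p) * ρ j ≤ ∑ j ∈ F, ρ j ^ (q / p) :=
            Finset.sum_le_sum fun j _ => hper j
        _ ≤ ∑' j, ρ j ^ (q / p) :=
            Summable.sum_le_tsum F (fun j _ => Real.rpow_nonneg (hρ0 j) _) hsummid
        _ ≤ M := hmid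
    have hVfin : V ≤ M ^ (s / p) := by
      have h9 := Real.rpow_le_rpow (Real.rpow_nonneg hV0 _) hVle
        (div_nonneg hs0.le hp0.le)
      rwa [← Real.rpow_mul hV0, (show p / s * (s / p) = 1 by field_simp), Real.rpow_one] at h9
    exact step1.trans hVfin

end Helpers3
set_option maxHeartbeats 1600000 in
/-- if `1 ≤ q ≤ p ≤ s ≤ r` then every mid `(q,p)`-summable sequence is mid
`(r,s)`-summable with `‖(x_j)‖_{r,s} ≤ ‖(x_j)‖_{q,p}` (in particular, `ℓ_p^mid ⊆ ℓ_s^mid`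
with the corresponding norm inequality whenever `p ≤ s`). -/
theorem stmt8 [RCLike 𝕜] [NormedAddCommGroup E] [NormedSpace 𝕜 E] [CompleteSpace E]
    (p q r s : ℝ) (hq : 1 ≤ q) (hqp : q ≤ p) (hps : p ≤ s) (hsr : s ≤ r)
    (x : ℕ → E) (hx : MidSummable 𝕜 q p x) :
    MidSummable 𝕜 r s x ∧ midNorm 𝕜 r s x ≤ midNorm 𝕜 q p x := by
  have hq0 : (0 : ℝ) < q := zero_lt_one.trans_le hq
  have hp0 : (0 : ℝ) < p := hq0.trans_le hqp
  have hs0 : (0 : ℝ) < s := hp0.trans_le hps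
  have hr0 : (0 : ℝ) < r := hs0.trans_le hsr
  have hp1 : 1 ≤ p := hq.trans hqp
  have hs1 : 1 ≤ s := hp1.trans hps
  obtain ⟨MB, hMB0, hMB⟩ := mid_uniform_bound hq hp1 hx
  have hsqrp : s * q ≤ r * p := by
    have := mul_le_mul hsr hqp hq0.le (by linarith : (0 : ℝ) ≤ r)
    linarith
  have he1 : 1 ≤ r * p / (s * q) := by
    rw [le_div_iff₀ (by positivity)]
    linarith
  have hqpe : q / p * (r * p / (s * q)) = r / s := by field_simp <;> ring
  have hcomp : ∀ K d : ℝ, 0 ≤ d → d ≤ K →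
      d ^ (r * p / (s * q)) ≤ K ^ (r * p / (s * q) - 1) * d := by
    intro K d hd hdK
    have h1 : d ^ (r * p / (s * q)) = d ^ (r * p / (s * q) - 1) * d := by
      calc d ^ (r * p / (s * q)) = d ^ (r * p / (s * q) - 1 + 1) := by congr 1; ring
        _ = d ^ (r * p / (s * q) - 1) * d ^ (1 : ℝ) :=
            Real.rpow_add_of_nonneg hd (by linarith) zero_le_one
        _ = d ^ (r * p / (s * q) - 1) * d := by rw [Real.rpow_one]
    rw [h1]
    exact mul_le_mul_of_nonneg_right (Real.rpow_le_rpow hd hdK (by linarith)) hd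
  have hconv : ∀ t : ℝ, 0 ≤ t → t ^ (r / s) = (t ^ (q / p)) ^ (r * p / (s * q)) := by
    intro t ht
    rw [← Real.rpow_mul ht, hqpe]
  constructor
  · -- mid (r,s)-summability
    intro xs hxs
    obtain ⟨A, hA0, hA⟩ := weak_bidual_bound hs1 hxs
    have hA'0 : (0 : ℝ) < A + 1 := by linarith
    set D : ℝ := (A + 1) ^ (1 / s) with hDdef
    have hD0 : 0 < D := Real.rpow_pos_of_pos hA'0 _
    have hDs : D⁻¹ ^ s = (A + 1)⁻¹ := by
      rw [Real.inv_rpow hD0.le, hDdef, one_div, Real.rpow_inv_rpow hA'0.le hs0.ne']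
    set xs' : ℕ → StrongDual 𝕜 E := fun n => ((D⁻¹ : ℝ) : 𝕜) • xs n with hxs'def
    have hc1 : ∀ (Φ : StrongDual 𝕜 (StrongDual 𝕜 E)) (n : ℕ),
        ‖Φ (xs' n)‖ ^ s = (A + 1)⁻¹ * ‖Φ (xs n)‖ ^ s := by
      intro Φ n
      simp only [hxs'def, _root_.map_smul, norm_smul, RCLike.norm_ofReal,
        abs_of_nonneg (inv_nonneg.2 hD0.le)]
      rw [Real.mul_rpow (inv_nonneg.2 hD0.le) (norm_nonneg _), hDs]
    have hc2 : ∀ j n, ‖xs' n (x j)‖ ^ s = (A + 1)⁻¹ * ‖xs n (x j)‖ ^ s := by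
      intro j n
      simp only [hxs'def, ContinuousLinearMap.smul_apply, norm_smul, RCLike.norm_ofReal,
        abs_of_nonneg (inv_nonneg.2 hD0.le)]
      rw [Real.mul_rpow (inv_nonneg.2 hD0.le) (norm_nonneg _), hDs]
    have hxs'W : WeaklySummable 𝕜 s xs' :=
      fun Φ => ((hxs Φ).mul_left _).congr fun n => (hc1 Φ n).symm
    have hxs'A : ∀ Φ : StrongDual 𝕜 (StrongDual 𝕜 E), ‖Φ‖ ≤ 1 → ∑' n, ‖Φ (xs' n)‖ ^ s ≤ 1 := by
      intro Φ hΦ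
      rw [tsum_congr (hc1 Φ), tsum_mul_left]
      have h1 : ∑' n, ‖Φ (xs n)‖ ^ s ≤ A + 1 := by
        refine (hA Φ).trans ?_
        have h2 : ‖Φ‖ ^ s ≤ 1 := Real.rpow_le_one (norm_nonneg Φ) hΦ hs0.le
        nlinarith [Real.rpow_nonneg (norm_nonneg Φ) s]
      calc (A + 1)⁻¹ * ∑' n, ‖Φ (xs n)‖ ^ s ≤ (A + 1)⁻¹ * (A + 1) :=
            mul_le_mul_of_nonneg_left h1 (inv_nonneg.2 hA'0.le)
        _ = 1 := inv_mul_cancel₀ hA'0.ne'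
    have hMain := fun Fs : Finset ℕ => main_bound hq hqp hps hx hxs'W hxs'A hMB0 hMB Fs
    have hcc0 : ∀ j, (0 : ℝ) ≤ ∑' n, ‖xs n (x j)‖ ^ s :=
      fun j => tsum_nonneg fun n => Real.rpow_nonneg (norm_nonneg _) _
    have hKb : ∀ Fs : Finset ℕ,
        ∑ j ∈ Fs, (∑' n, ‖xs n (x j)‖ ^ s) ^ (q / p) ≤ (A + 1) ^ (q / p) * MB ^ (s / p) := by
      intro Fs
      have h2 := hMain Fs
      have h3 : ∀ j, (∑' n, ‖xs' n (x j)‖ ^ s) ^ (q / p)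
          = (A + 1)⁻¹ ^ (q / p) * (∑' n, ‖xs n (x j)‖ ^ s) ^ (q / p) := by
        intro j
        rw [tsum_congr (hc2 j), tsum_mul_left,
          Real.mul_rpow (inv_nonneg.2 hA'0.le) (hcc0 j)]
      rw [Finset.sum_congr rfl (fun j _ => h3 j), ← Finset.mul_sum] at h2
      rw [Real.inv_rpow hA'0.le, inv_mul_le_iff₀ (Real.rpow_pos_of_pos hA'0 _)] at h2
      exact h2
    have hsd : Summable fun j => (∑' n, ‖xs n (x j)‖ ^ s) ^ (q / p) :=
      summable_of_sum_le (fun j => Real.rpow_nonneg (hcc0 j) _) hKb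
    have hdK : ∀ j, (∑' n, ‖xs n (x j)‖ ^ s) ^ (q / p) ≤ (A + 1) ^ (q / p) * MB ^ (s / p) := by
      intro j
      have h4 := hKb {j}
      simpa using h4
    refine Summable.of_nonneg_of_le (fun j => Real.rpow_nonneg (hcc0 j) _) (fun j => ?_)
      (hsd.mul_left (((A + 1) ^ (q / p) * MB ^ (s / p)) ^ (r * p / (s * q) - 1)))
    rw [hconv _ (hcc0 j)]
    exact hcomp _ _ (Real.rpow_nonneg (hcc0 j) _) (hdK j)
  · -- the norm inequality
    have hval0 : ∀ zs : {zs : ℕ → StrongDual 𝕜 E // WeaklySummable 𝕜 p zs ∧ weakNorm 𝕜 p zs ≤ 1},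
        (0 : ℝ) ≤ (∑' j, (∑' n, ‖zs.1 n (x j)‖ ^ p) ^ (q / p)) ^ (1 / q) :=
      fun zs => Real.rpow_nonneg (tsum_nonneg fun j => Real.rpow_nonneg
        (tsum_nonneg fun n => Real.rpow_nonneg (norm_nonneg _) _) _) _
    have hMN0 : 0 ≤ midNorm 𝕜 q p x := Real.iSup_nonneg hval0
    have hMqp : ∀ ys : ℕ → StrongDual 𝕜 E, WeaklySummable 𝕜 p ys →
        (∀ Φ : StrongDual 𝕜 (StrongDual 𝕜 E), ‖Φ‖ ≤ 1 → ∑' n, ‖Φ (ys n)‖ ^ p ≤ 1) →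
        ∑' j, (∑' n, ‖ys n (x j)‖ ^ p) ^ (q / p) ≤ midNorm 𝕜 q p x ^ q := by
      intro ys hysW hysU
      have hysN : weakNorm 𝕜 p ys ≤ 1 := by
        rw [weakNorm]
        refine Real.iSup_le (fun φ => ?_) zero_le_one
        calc (∑' j, ‖φ.1 (ys j)‖ ^ p) ^ (1 / p)
            ≤ (1 : ℝ) ^ (1 / p) := Real.rpow_le_rpow
              (tsum_nonneg fun n => Real.rpow_nonneg (norm_nonneg _) _)
              (hysU φ.1 φ.2) (one_div_nonneg.2 hp0.le)
          _ = 1 := Real.one_rpow _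
      have hbdd : BddAbove (Set.range fun zs : {zs : ℕ → StrongDual 𝕜 E //
          WeaklySummable 𝕜 p zs ∧ weakNorm 𝕜 p zs ≤ 1} =>
          (∑' j, (∑' n, ‖zs.1 n (x j)‖ ^ p) ^ (q / p)) ^ (1 / q)) := by
        refine ⟨MB ^ (1 / q), Set.forall_mem_range.2 fun zs => ?_⟩
        have hzU := unit_ball_bound hp1 zs.2.1 zs.2.2
        have h5 := hMB zs.1 zs.2.1 hzU
        exact Real.rpow_le_rpow (tsum_nonneg fun j => Real.rpow_nonneg
          (tsum_nonneg fun n => Real.rpow_nonneg (norm_nonneg _) _) _) h5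
          (one_div_nonneg.2 hq0.le)
      have hval := le_ciSup hbdd (⟨ys, hysW, hysN⟩ : {zs : ℕ → StrongDual 𝕜 E //
          WeaklySummable 𝕜 p zs ∧ weakNorm 𝕜 p zs ≤ 1})
      have h2 : (∑' j, (∑' n, ‖ys n (x j)‖ ^ p) ^ (q / p)) ^ (1 / q) ≤ midNorm 𝕜 q p x :=
        hval
      have hX0 : 0 ≤ ∑' j, (∑' n, ‖ys n (x j)‖ ^ p) ^ (q / p) := tsum_nonneg fun j =>
        Real.rpow_nonneg (tsum_nonneg fun n => Real.rpow_nonneg (norm_nonneg _) _) _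
      have h3 := Real.rpow_le_rpow (Real.rpow_nonneg hX0 _) h2 hq0.le
      rwa [one_div, Real.rpow_inv_rpow hX0 hq0.ne'] at h3
    refine Real.iSup_le ?_ hMN0
    rintro ⟨xs, hxsW, hxsN⟩
    show (∑' j, (∑' n, ‖xs n (x j)‖ ^ s) ^ (r / s)) ^ (1 / r) ≤ midNorm 𝕜 q p x
    have hA1 : ∀ Φ : StrongDual 𝕜 (StrongDual 𝕜 E), ‖Φ‖ ≤ 1 → ∑' n, ‖Φ (xs n)‖ ^ s ≤ 1 :=
      unit_ball_bound hs1 hxsW hxsN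
    have hMain := fun Fs : Finset ℕ => main_bound hq hqp hps hx hxsW hA1
      (Real.rpow_nonneg hMN0 q) hMqp Fs
    have hT0eq : (midNorm 𝕜 q p x ^ q) ^ (s / p) = midNorm 𝕜 q p x ^ (q * (s / p)) :=
      (Real.rpow_mul hMN0 _ _).symm
    have hcc0 : ∀ j, (0 : ℝ) ≤ ∑' n, ‖xs n (x j)‖ ^ s :=
      fun j => tsum_nonneg fun n => Real.rpow_nonneg (norm_nonneg _) _
    have hFb : ∀ Fs : Finset ℕ,
        ∑ j ∈ Fs, (∑' n, ‖xs n (x j)‖ ^ s) ^ (q / p) ≤ midNorm 𝕜 q p x ^ (q * (s / p)) :=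
      fun Fs => (hMain Fs).trans_eq hT0eq
    have hsd : Summable fun j => (∑' n, ‖xs n (x j)‖ ^ s) ^ (q / p) :=
      summable_of_sum_le (fun j => Real.rpow_nonneg (hcc0 j) _) hFb
    have htd : ∑' j, (∑' n, ‖xs n (x j)‖ ^ s) ^ (q / p) ≤ midNorm 𝕜 q p x ^ (q * (s / p)) :=
      Summable.tsum_le_of_sum_le hsd hFb
    have hdT : ∀ j, (∑' n, ‖xs n (x j)‖ ^ s) ^ (q / p) ≤ midNorm 𝕜 q p x ^ (q * (s / p)) := by
      intro j
      refine le_trans ?_ htd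
      exact Summable.le_tsum hsd j fun k _ => Real.rpow_nonneg (hcc0 k) _
    have hα0 : (0 : ℝ) ≤ q * (s / p) := by positivity
    have hβ0 : (0 : ℝ) ≤ r * p / (s * q) - 1 := by linarith
    have hTT0 : 0 ≤ midNorm 𝕜 q p x ^ (q * (s / p)) := Real.rpow_nonneg hMN0 _
    have hr_sum : Summable fun j => (∑' n, ‖xs n (x j)‖ ^ s) ^ (r / s) := by
      refine Summable.of_nonneg_of_le (fun j => Real.rpow_nonneg (hcc0 j) _) (fun j => ?_)
        (hsd.mul_left ((midNorm 𝕜 q p x ^ (q * (s / p))) ^ (r * p / (s * q) - 1)))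
      rw [hconv _ (hcc0 j)]
      exact hcomp _ _ (Real.rpow_nonneg (hcc0 j) _) (hdT j)
    have hr_tsum : ∑' j, (∑' n, ‖xs n (x j)‖ ^ s) ^ (r / s) ≤ midNorm 𝕜 q p x ^ r := by
      have h6 : ∑' j, (∑' n, ‖xs n (x j)‖ ^ s) ^ (r / s)
          ≤ (midNorm 𝕜 q p x ^ (q * (s / p))) ^ (r * p / (s * q) - 1)
            * ∑' j, (∑' n, ‖xs n (x j)‖ ^ s) ^ (q / p) := by
        rw [← tsum_mul_left]
        refine Summable.tsum_le_tsum (fun j => ?_) hr_sum (hsd.mul_left _)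
        rw [hconv _ (hcc0 j)]
        exact hcomp _ _ (Real.rpow_nonneg (hcc0 j) _) (hdT j)
      refine h6.trans ?_
      calc (midNorm 𝕜 q p x ^ (q * (s / p))) ^ (r * p / (s * q) - 1)
            * ∑' j, (∑' n, ‖xs n (x j)‖ ^ s) ^ (q / p)
          ≤ (midNorm 𝕜 q p x ^ (q * (s / p))) ^ (r * p / (s * q) - 1)
            * midNorm 𝕜 q p x ^ (q * (s / p)) :=
            mul_le_mul_of_nonneg_left htd (Real.rpow_nonneg hTT0 _)
        _ = midNorm 𝕜 q p x ^ (q * (s / p) * (r * p / (s * q) - 1))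
            * midNorm 𝕜 q p x ^ (q * (s / p)) := by rw [← Real.rpow_mul hMN0]
        _ = midNorm 𝕜 q p x ^ (q * (s / p) * (r * p / (s * q) - 1) + q * (s / p)) :=
            (Real.rpow_add_of_nonneg hMN0 (mul_nonneg hα0 hβ0) hα0).symm
        _ = midNorm 𝕜 q p x ^ r := by congr 1; field_simp <;> ring
    calc (∑' j, (∑' n, ‖xs n (x j)‖ ^ s) ^ (r / s)) ^ (1 / r)
        ≤ (midNorm 𝕜 q p x ^ r) ^ (1 / r) := Real.rpow_le_rpow
          (tsum_nonneg fun j => Real.rpow_nonneg (hcc0 j) _) hr_tsum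
          (one_div_nonneg.2 hr0.le)
      _ = midNorm 𝕜 q p x := by rw [one_div, Real.rpow_rpow_inv hMN0 hr0.ne']
end
end

section
/- Let E and F be Banach spaces, 1 ≤ p, q < ∞, and T : E → F a bounded linear operator. If (x_j)_{j=1}^∞ is a mid (q,p)-summable sequence in E, then (T(x_j))_{j=1}^∞ is a mid (q,p)-summable sequence in F, and the induced linear operator T̂ : ℓ_{q,p}^mid(E) → ℓ_{q,p}^mid(F), T̂((x_j)_j) = (T(x_j))_j, is bounded with operator norm ‖T̂‖ = ‖T‖. -/
open NormedSpace MeasureTheory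

noncomputable section

open Filter Topology ENNReal

variable {𝕜 E F : Type*}

section Helpers

variable [RCLike 𝕜] [NormedAddCommGroup E] [NormedSpace 𝕜 E]
  [NormedAddCommGroup F] [NormedSpace 𝕜 F]

instance ddSN : NormedAddCommGroup (StrongDual 𝕜 (StrongDual 𝕜 E)) :=
  ContinuousLinearMap.toNormedAddCommGroup

instance ddNS : NormedSpace 𝕜 (StrongDual 𝕜 (StrongDual 𝕜 E)) :=
  ContinuousLinearMap.toNormedSpace

set_option maxHeartbeats 2000000 in
lemma weak_sup_bdd {p : ℝ} (hp : 1 ≤ p) (xs : ℕ → StrongDual 𝕜 E)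
    (hxs : WeaklySummable 𝕜 p xs) :
    ∃ C : ℝ, ∀ Φ : StrongDual 𝕜 (StrongDual 𝕜 E), ‖Φ‖ ≤ 1 → (∑' n, ‖Φ (xs n)‖ ^ p) ^ (1/p) ≤ C := by
  have hp0 : (0:ℝ) < p := lt_of_lt_of_le one_pos hp
  set P : ℝ≥0∞ := ENNReal.ofReal p with hP
  haveI : Fact (1 ≤ P) := ⟨by rw [hP]; exact ENNReal.one_le_ofReal.mpr hp⟩
  have hP0 : P ≠ 0 := (lt_of_lt_of_le zero_lt_one Fact.out).ne'
  have hPt : P.toReal = p := ENNReal.toReal_ofReal hp0.le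
  have hPt0 : 0 < P.toReal := by rw [hPt]; exact hp0
  have hmem : ∀ Φ : StrongDual 𝕜 (StrongDual 𝕜 E), Memℓp (fun n => Φ (xs n)) P := by
    intro Φ
    apply memℓp_gen
    simp only [hPt]
    exact hxs Φ
  let u : StrongDual 𝕜 (StrongDual 𝕜 E) →ₗ[𝕜] lp (fun _ : ℕ => 𝕜) P :=
    { toFun := fun Φ => ⟨fun n => Φ (xs n), hmem Φ⟩
      map_add' := fun Φ Ψ => by ext n; rfl
      map_smul' := fun c Φ => by ext n; rfl }
  have hseq : ∀ (Φs : ℕ → StrongDual 𝕜 (StrongDual 𝕜 E)) (Φ : StrongDual 𝕜 (StrongDual 𝕜 E))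
      (y : lp (fun _ : ℕ => 𝕜) P), Tendsto Φs atTop (𝓝 Φ) →
      Tendsto (u ∘ Φs) atTop (𝓝 y) → y = u Φ := by
    intro Φs Φ y hΦ hy
    ext n
    have hcont : Continuous fun Ψ : StrongDual 𝕜 (StrongDual 𝕜 E) => Ψ (xs n) :=
      (inclusionInDoubleDual 𝕜 (StrongDual 𝕜 E) (xs n)).continuous
    have h1 : Tendsto (fun i => Φs i (xs n)) atTop (𝓝 (Φ (xs n))) :=
      (hcont.tendsto Φ).comp hΦ
    have hy' : Tendsto (fun i => ‖u (Φs i) - y‖) atTop (𝓝 0) := by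
      have := tendsto_iff_norm_sub_tendsto_zero.mp hy
      simpa [Function.comp] using this
    have h2 : Tendsto (fun i => ‖(u (Φs i) : ℕ → 𝕜) n - (y : ℕ → 𝕜) n‖) atTop (𝓝 0) := by
      apply squeeze_zero (fun i => norm_nonneg _) (fun i => ?_) hy'
      have h3 := lp.norm_apply_le_norm hP0 (u (Φs i) - y) n
      simpa [lp.coeFn_sub] using h3
    have h2' : Tendsto (fun i => (u (Φs i) : ℕ → 𝕜) n) atTop (𝓝 ((y : ℕ → 𝕜) n)) :=
      tendsto_iff_norm_sub_tendsto_zero.mpr h2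
    exact tendsto_nhds_unique h2' h1
  have hu : Continuous u :=
    LinearMap.continuous_of_seq_closed_graph (𝕜 := 𝕜) (E := StrongDual 𝕜 (StrongDual 𝕜 E))
      (F := lp (fun _ : ℕ => 𝕜) P) u hseq
  let u' : StrongDual 𝕜 (StrongDual 𝕜 E) →L[𝕜] lp (fun _ : ℕ => 𝕜) P := ⟨u, hu⟩
  refine ⟨‖u'‖, fun Φ hΦ => ?_⟩
  have h4 : ‖u' Φ‖ = (∑' n, ‖Φ (xs n)‖ ^ p) ^ (1/p) := by
    rw [lp.norm_eq_tsum_rpow hPt0]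
    simp only [hPt]
    rfl
  rw [← h4]
  exact ContinuousLinearMap.unit_le_opNorm u' Φ hΦ

lemma weak_tsum_le {p : ℝ} (hp : 1 ≤ p) (xs : ℕ → StrongDual 𝕜 E)
    (hxs : WeaklySummable 𝕜 p xs) (hw : weakNorm 𝕜 p xs ≤ 1)
    (Φ : StrongDual 𝕜 (StrongDual 𝕜 E)) : (∑' n, ‖Φ (xs n)‖ ^ p) ≤ ‖Φ‖ ^ p := by
  have hp0 : (0:ℝ) < p := lt_of_lt_of_le one_pos hp
  obtain ⟨C, hC⟩ := weak_sup_bdd hp xs hxs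
  have hbdd : BddAbove (Set.range fun φ : {φ : StrongDual 𝕜 (StrongDual 𝕜 E) // ‖φ‖ ≤ 1} =>
      (∑' n, ‖φ.1 (xs n)‖ ^ p) ^ (1/p)) := ⟨C, by rintro _ ⟨φ, rfl⟩; exact hC φ.1 φ.2⟩
  have key : ∀ φ : StrongDual 𝕜 (StrongDual 𝕜 E), ‖φ‖ ≤ 1 → (∑' n, ‖φ (xs n)‖ ^ p) ≤ 1 := by
    intro φ hφ
    have h1 : (∑' n, ‖φ (xs n)‖ ^ p) ^ (1/p) ≤ weakNorm 𝕜 p xs :=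
      le_ciSup hbdd (⟨φ, hφ⟩ : {φ : StrongDual 𝕜 (StrongDual 𝕜 E) // ‖φ‖ ≤ 1})
    have h2 : (∑' n, ‖φ (xs n)‖ ^ p) ^ (1/p) ≤ 1 := h1.trans hw
    have h3 : (0:ℝ) ≤ ∑' n, ‖φ (xs n)‖ ^ p :=
      tsum_nonneg fun n => Real.rpow_nonneg (norm_nonneg _) p
    have h4 : ((∑' n, ‖φ (xs n)‖ ^ p) ^ (1/p)) ^ p ≤ (1:ℝ) ^ p :=
      Real.rpow_le_rpow (Real.rpow_nonneg h3 _) h2 hp0.le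
    rwa [← Real.rpow_mul h3, one_div_mul_cancel hp0.ne', Real.rpow_one, Real.one_rpow] at h4
  rcases eq_or_ne Φ 0 with rfl | hΦ
  · simp [Real.zero_rpow hp0.ne']
  · have hn0 : ‖Φ‖ ≠ 0 := fun h => hΦ ((ContinuousLinearMap.opNorm_zero_iff Φ).mp h)
    have hn : (0:ℝ) < ‖Φ‖ := (norm_nonneg Φ).lt_of_ne (Ne.symm hn0)
    set c : 𝕜 := ((‖Φ‖ : ℝ) : 𝕜)⁻¹ with hc
    have hnc : ‖c‖ = ‖Φ‖⁻¹ := by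
      rw [hc, norm_inv, RCLike.norm_ofReal, abs_of_nonneg (norm_nonneg _)]
    have hφ1 : ‖c • Φ‖ ≤ 1 := by
      rw [norm_smul, hnc, inv_mul_cancel₀ hn.ne']
    have h5 := key (c • Φ) hφ1
    have h6 : ∀ n, ‖(c • Φ) (xs n)‖ ^ p = ‖Φ‖⁻¹ ^ p * ‖Φ (xs n)‖ ^ p := by
      intro n
      rw [ContinuousLinearMap.smul_apply, norm_smul, hnc,
        Real.mul_rpow (inv_nonneg.mpr (norm_nonneg _)) (norm_nonneg _)]
    rw [tsum_congr h6, tsum_mul_left, Real.inv_rpow (norm_nonneg _)] at h5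
    have hpos : (0:ℝ) < ‖Φ‖ ^ p := Real.rpow_pos_of_pos hn p
    calc (∑' n, ‖Φ (xs n)‖ ^ p)
        = ‖Φ‖ ^ p * ((‖Φ‖ ^ p)⁻¹ * ∑' n, ‖Φ (xs n)‖ ^ p) := by
          rw [← mul_assoc, mul_inv_cancel₀ hpos.ne', one_mul]
      _ ≤ ‖Φ‖ ^ p * 1 := mul_le_mul_of_nonneg_left h5 hpos.le
      _ = ‖Φ‖ ^ p := mul_one _

set_option maxHeartbeats 1000000 in
lemma mid_bdd {q p : ℝ} (hp : 1 ≤ p) (hq : 1 ≤ q) (x : ℕ → E) (hx : MidSummable 𝕜 q p x) :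
    ∃ C : ℝ, 0 ≤ C ∧ ∀ xs : ℕ → StrongDual 𝕜 E, WeaklySummable 𝕜 p xs → weakNorm 𝕜 p xs ≤ 1 →
      (∑' j, (∑' n, ‖xs n (x j)‖ ^ p) ^ (q/p)) ≤ C := by
  have hp0 : (0:ℝ) < p := lt_of_lt_of_le one_pos hp
  have hq0 : (0:ℝ) < q := lt_of_lt_of_le one_pos hq
  by_contra hcon
  push_neg at hcon
  have hsel : ∀ k : ℕ, ∃ xs : ℕ → StrongDual 𝕜 E, WeaklySummable 𝕜 p xs ∧ weakNorm 𝕜 p xs ≤ 1 ∧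
      ((2:ℝ) ^ k) ^ q * k < ∑' j, (∑' n, ‖xs n (x j)‖ ^ p) ^ (q/p) := by
    intro k
    obtain ⟨xs, h1, h2, h3⟩ := hcon (((2:ℝ)^k)^q * k) (by positivity)
    exact ⟨xs, h1, h2, h3⟩
  choose w hw1 hw2 hw3 using hsel
  set e : ℕ ≃ ℕ × ℕ := (Denumerable.eqv (ℕ × ℕ)).symm with he
  set g2 : ℕ × ℕ → StrongDual 𝕜 E := fun kn => ((2:𝕜) ^ kn.1)⁻¹ • w kn.1 kn.2 with hg2
  set ys : ℕ → StrongDual 𝕜 E := fun m => g2 (e m) with hys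
  have hnorm2 : ∀ k : ℕ, ‖((2:𝕜) ^ k)⁻¹‖ = ((2:ℝ) ^ k)⁻¹ := by
    intro k; rw [norm_inv, norm_pow, RCLike.norm_two]
  have hfn : ∀ (Φ : StrongDual 𝕜 (StrongDual 𝕜 E)) (k n : ℕ), ‖Φ (g2 (k, n))‖ ^ p
      = (((2:ℝ) ^ k)⁻¹) ^ p * ‖Φ (w k n)‖ ^ p := by
    intro Φ k n
    rw [hg2]
    simp only [_root_.map_smul, smul_eq_mul, norm_mul, hnorm2]
    rw [Real.mul_rpow (by positivity) (norm_nonneg _)]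
  have keyS : ∀ Φ : StrongDual 𝕜 (StrongDual 𝕜 E), Summable (fun kn : ℕ × ℕ => ‖Φ (g2 kn)‖ ^ p) := by
    intro Φ
    refine (summable_prod_of_nonneg (fun kn => by positivity)).mpr ⟨fun k => ?_, ?_⟩
    · exact ((hw1 k Φ).mul_left ((((2:ℝ) ^ k)⁻¹) ^ p)).congr fun n => (hfn Φ k n).symm
    · have h3 : ∀ k : ℕ, (((2:ℝ) ^ k)⁻¹) ^ p = ((2:ℝ)⁻¹ ^ p) ^ k := by
        intro k
        rw [← inv_pow, ← Real.rpow_natCast ((2:ℝ)⁻¹) k, ← Real.rpow_mul (by norm_num),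
          show ((k:ℝ) * p) = p * (k:ℝ) from mul_comm _ _,
          Real.rpow_mul (by norm_num), Real.rpow_natCast]
      have hb : ∀ k : ℕ, (∑' n, ‖Φ (g2 (k, n))‖ ^ p)
          ≤ ((2:ℝ)⁻¹ ^ p) ^ k * ‖Φ‖ ^ p := by
        intro k
        have h1 : (∑' n, ‖Φ (g2 (k, n))‖ ^ p)
            = (((2:ℝ) ^ k)⁻¹) ^ p * ∑' n, ‖Φ (w k n)‖ ^ p := by
          rw [tsum_congr (fun n => hfn Φ k n), tsum_mul_left]
        rw [h1, h3 k]
        exact mul_le_mul_of_nonneg_left (weak_tsum_le hp (w k) (hw1 k) (hw2 k) Φ)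
          (by positivity)
      refine Summable.of_nonneg_of_le (fun k => tsum_nonneg fun n => by positivity) hb ?_
      refine Summable.mul_right _ (summable_geometric_of_lt_one (by positivity) ?_)
      exact Real.rpow_lt_one (by norm_num) (by norm_num) hp0
  have hysW : WeaklySummable 𝕜 p ys := fun Φ => (Equiv.summable_iff e).mpr (keyS Φ)
  have hB := hx ys hysW
  set B := ∑' j, (∑' m, ‖ys m (x j)‖ ^ p) ^ (q/p) with hBdef
  obtain ⟨k, hk⟩ := exists_nat_gt B
  have hfj : ∀ j : ℕ, Summable (fun kn : ℕ × ℕ => ‖(g2 kn) (x j)‖ ^ p) := by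
    intro j
    exact (keyS (inclusionInDoubleDual 𝕜 E (x j))).congr fun kn => by rw [dual_def]
  have hslice : ∀ j : ℕ, (((2:ℝ) ^ k)⁻¹) ^ p * ∑' n, ‖w k n (x j)‖ ^ p
      ≤ ∑' m, ‖ys m (x j)‖ ^ p := by
    intro j
    have h1 : ∑' m, ‖ys m (x j)‖ ^ p = ∑' kn : ℕ × ℕ, ‖(g2 kn) (x j)‖ ^ p :=
      Equiv.tsum_eq e (fun kn => ‖(g2 kn) (x j)‖ ^ p)
    have hsl := (summable_prod_of_nonneg (fun kn => by positivity)).mp (hfj j)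
    rw [h1, Summable.tsum_prod' (hfj j) hsl.1]
    have h2eq : ∀ n, ‖g2 (k, n) (x j)‖ ^ p
        = (((2:ℝ) ^ k)⁻¹) ^ p * ‖w k n (x j)‖ ^ p := by
      intro n
      have := hfn (inclusionInDoubleDual 𝕜 E (x j)) k n
      rwa [dual_def, dual_def] at this
    have h4 : (∑' n, ‖g2 (k, n) (x j)‖ ^ p)
        = (((2:ℝ)^k)⁻¹)^p * ∑' n, ‖w k n (x j)‖^p := by
      rw [tsum_congr h2eq, tsum_mul_left]
    rw [← h4]
    exact Summable.le_tsum hsl.2 k (fun k' _ => tsum_nonneg fun n => by positivity)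
  have hpq : p * (q / p) = q := by field_simp
  have hpow : ∀ j : ℕ, (((2:ℝ) ^ k)⁻¹) ^ q * ((∑' n, ‖w k n (x j)‖ ^ p) ^ (q/p))
      ≤ (∑' m, ‖ys m (x j)‖ ^ p) ^ (q/p) := by
    intro j
    have h5 := Real.rpow_le_rpow
      (mul_nonneg (by positivity) (tsum_nonneg fun n => by positivity)) (hslice j)
      (by positivity : (0:ℝ) ≤ q/p)
    rwa [Real.mul_rpow (by positivity) (tsum_nonneg fun n => by positivity),
      ← Real.rpow_mul (by positivity), hpq] at h5
  have hsum1 : Summable fun j => (((2:ℝ)^k)⁻¹)^q * ((∑' n, ‖w k n (x j)‖ ^ p) ^ (q/p)) :=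
    (hx (w k) (hw1 k)).mul_left _
  have h6 : (((2:ℝ)^k)⁻¹)^q * (∑' j, (∑' n, ‖w k n (x j)‖ ^ p) ^ (q/p)) ≤ B := by
    rw [← tsum_mul_left]
    exact Summable.tsum_le_tsum hpow hsum1 hB
  have h7 : (((2:ℝ)^k)⁻¹)^q * (((2:ℝ)^k)^q * k) <
      (((2:ℝ)^k)⁻¹)^q * (∑' j, (∑' n, ‖w k n (x j)‖ ^ p) ^ (q/p)) :=
    mul_lt_mul_of_pos_left (hw3 k) (by positivity)
  have h8 : (((2:ℝ)^k)⁻¹)^q * (((2:ℝ)^k)^q * k) = k := by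
    rw [← mul_assoc, ← Real.mul_rpow (by positivity) (by positivity),
      inv_mul_cancel₀ (by positivity : (0:ℝ) < (2:ℝ)^k).ne', Real.one_rpow, one_mul]
  have hkB : (k:ℝ) < B := by rw [← h8]; exact lt_of_lt_of_le h7 h6
  linarith

lemma midNorm_nonneg {q p : ℝ} (x : ℕ → E) : 0 ≤ midNorm 𝕜 q p x :=
  Real.iSup_nonneg fun xs => Real.rpow_nonneg
    (tsum_nonneg fun j => Real.rpow_nonneg
      (tsum_nonneg fun n => Real.rpow_nonneg (norm_nonneg _) _) _) _

lemma le_midNorm {q p : ℝ} (hp : 1 ≤ p) (hq : 1 ≤ q) (x : ℕ → E) (hx : MidSummable 𝕜 q p x)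
    (xs : ℕ → StrongDual 𝕜 E) (h1 : WeaklySummable 𝕜 p xs) (h2 : weakNorm 𝕜 p xs ≤ 1) :
    (∑' j, (∑' n, ‖xs n (x j)‖ ^ p) ^ (q/p)) ^ (1/q) ≤ midNorm 𝕜 q p x := by
  obtain ⟨C, hC0, hC⟩ := mid_bdd hp hq x hx
  have hbdd : BddAbove (Set.range fun xs' :
      {xs' : ℕ → StrongDual 𝕜 E // WeaklySummable 𝕜 p xs' ∧ weakNorm 𝕜 p xs' ≤ 1} =>
      (∑' j, (∑' n, ‖xs'.1 n (x j)‖ ^ p) ^ (q/p)) ^ (1/q)) := by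
    refine ⟨C ^ (1/q), ?_⟩
    rintro _ ⟨xs', rfl⟩
    exact Real.rpow_le_rpow
      (tsum_nonneg fun j => Real.rpow_nonneg (tsum_nonneg fun n => by positivity) _)
      (hC xs'.1 xs'.2.1 xs'.2.2) (by positivity)
  exact le_ciSup hbdd
    (⟨xs, h1, h2⟩ : {xs' : ℕ → StrongDual 𝕜 E // WeaklySummable 𝕜 p xs' ∧ weakNorm 𝕜 p xs' ≤ 1})

def pull (T : E →L[𝕜] F) (Φ : StrongDual 𝕜 (StrongDual 𝕜 E)) : StrongDual 𝕜 (StrongDual 𝕜 F) :=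
  LinearMap.mkContinuous
    { toFun := fun g => Φ (g.comp T)
      map_add' := fun g h => by simp [ContinuousLinearMap.add_comp]
      map_smul' := fun c g => by simp [ContinuousLinearMap.smul_comp] }
    (‖Φ‖ * ‖T‖)
    (fun g => by
      calc ‖Φ (g.comp T)‖ ≤ ‖Φ‖ * ‖g.comp T‖ := Φ.le_opNorm _
        _ ≤ ‖Φ‖ * (‖g‖ * ‖T‖) :=
            mul_le_mul_of_nonneg_left (ContinuousLinearMap.opNorm_comp_le g T) (norm_nonneg Φ)
        _ = ‖Φ‖ * ‖T‖ * ‖g‖ := by ring)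

lemma pull_apply (T : E →L[𝕜] F) (Φ : StrongDual 𝕜 (StrongDual 𝕜 E)) (g : StrongDual 𝕜 F) :
    pull T Φ g = Φ (g.comp T) := rfl

lemma pull_norm_le (T : E →L[𝕜] F) (Φ : StrongDual 𝕜 (StrongDual 𝕜 E)) : ‖pull T Φ‖ ≤ ‖Φ‖ * ‖T‖ :=
  LinearMap.mkContinuous_norm_le _ (mul_nonneg (norm_nonneg _) (norm_nonneg _)) _

lemma weak_comp {p : ℝ} (T : E →L[𝕜] F) (ys : ℕ → StrongDual 𝕜 F) (h : WeaklySummable 𝕜 p ys) :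
    WeaklySummable 𝕜 p (fun n => (ys n).comp T) := by
  intro Φ
  exact (h (pull T Φ)).congr fun n => rfl

def sgl {X : Type*} [NormedAddCommGroup X] (v : X) : ℕ → X := fun j => if j = 0 then v else 0

lemma midSummable_sgl {q p : ℝ} (hp : 1 ≤ p) (hq : 1 ≤ q) (v : E) :
    MidSummable 𝕜 q p (sgl v) := by
  have hp0 : (0:ℝ) < p := lt_of_lt_of_le one_pos hp
  have hq0 : (0:ℝ) < q := lt_of_lt_of_le one_pos hq
  intro xs _
  apply summable_of_ne_finset_zero (s := ({0} : Finset ℕ))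
  intro j hj
  have hj0 : j ≠ 0 := by simpa using hj
  have hz : ∀ n, ‖xs n (sgl v j)‖ ^ p = 0 := by
    intro n
    rw [show sgl v j = 0 from if_neg hj0, map_zero, norm_zero, Real.zero_rpow hp0.ne']
  rw [tsum_congr hz, tsum_zero, Real.zero_rpow (div_ne_zero hq0.ne' hp0.ne')]

lemma midNorm_sgl_le {q p : ℝ} (hp : 1 ≤ p) (hq : 1 ≤ q) (v : E) :
    midNorm 𝕜 q p (sgl v) ≤ ‖v‖ := by
  have hp0 : (0:ℝ) < p := lt_of_lt_of_le one_pos hp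
  have hq0 : (0:ℝ) < q := lt_of_lt_of_le one_pos hq
  apply Real.iSup_le _ (norm_nonneg v)
  rintro ⟨xs, h1, h2⟩
  have hterm : ∀ j, j ≠ 0 → (∑' n, ‖xs n (sgl v j)‖ ^ p) ^ (q/p) = 0 := by
    intro j hj
    have hz : ∀ n, ‖xs n (sgl v j)‖ ^ p = 0 := by
      intro n
      rw [show sgl v j = 0 from if_neg hj, map_zero, norm_zero, Real.zero_rpow hp0.ne']
    rw [tsum_congr hz, tsum_zero, Real.zero_rpow (div_ne_zero hq0.ne' hp0.ne')]
  rw [tsum_eq_single 0 hterm, show sgl v 0 = v from if_pos rfl]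
  have hnn : (0:ℝ) ≤ ∑' n, ‖xs n v‖ ^ p := tsum_nonneg fun n => by positivity
  have hcol : ((∑' n, ‖xs n v‖ ^ p) ^ (q/p)) ^ (1/q) = (∑' n, ‖xs n v‖ ^ p) ^ (1/p) := by
    rw [← Real.rpow_mul hnn]
    congr 1
    field_simp
    try ring
  rw [hcol]
  have hb : (∑' n, ‖xs n v‖ ^ p) ≤ ‖v‖ ^ p := by
    have h3 := weak_tsum_le hp xs h1 h2 (inclusionInDoubleDual 𝕜 E v)
    calc (∑' n, ‖xs n v‖ ^ p) = ∑' n, ‖(inclusionInDoubleDual 𝕜 E v) (xs n)‖ ^ p :=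
          tsum_congr fun n => by rw [dual_def]
      _ ≤ ‖inclusionInDoubleDual 𝕜 E v‖ ^ p := h3
      _ ≤ ‖v‖ ^ p := Real.rpow_le_rpow (norm_nonneg _) (double_dual_bound 𝕜 E v) hp0.le
  calc (∑' n, ‖xs n v‖ ^ p) ^ (1/p) ≤ (‖v‖ ^ p) ^ (1/p) :=
        Real.rpow_le_rpow hnn hb (by positivity)
    _ = ‖v‖ := by
        rw [← Real.rpow_mul (norm_nonneg v), mul_one_div, div_self hp0.ne', Real.rpow_one]

lemma norm_le_midNorm_sgl {q p : ℝ} (hp : 1 ≤ p) (hq : 1 ≤ q) (v : E) :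
    ‖v‖ ≤ midNorm 𝕜 q p (sgl v) := by
  have hp0 : (0:ℝ) < p := lt_of_lt_of_le one_pos hp
  have hq0 : (0:ℝ) < q := lt_of_lt_of_le one_pos hq
  rcases eq_or_ne v 0 with rfl | hv
  · simpa using midNorm_nonneg (𝕜 := 𝕜) (q := q) (p := p) (sgl (0:E))
  obtain ⟨g, hg1, hg2⟩ := exists_dual_vector 𝕜 v (norm_ne_zero_iff.mpr hv)
  have hW : WeaklySummable 𝕜 p (sgl g) := by
    intro Φ
    apply summable_of_ne_finset_zero (s := ({0} : Finset ℕ))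
    intro n hn
    rw [show sgl g n = 0 from if_neg (by simpa using hn), map_zero, norm_zero,
      Real.zero_rpow hp0.ne']
  have hwn : weakNorm 𝕜 p (sgl g) ≤ 1 := by
    apply Real.iSup_le _ zero_le_one
    rintro ⟨Φ, hΦ⟩
    have hterm : ∀ n, n ≠ 0 → ‖Φ (sgl g n)‖ ^ p = 0 := by
      intro n hn
      rw [show sgl g n = 0 from if_neg hn, map_zero, norm_zero, Real.zero_rpow hp0.ne']
    rw [tsum_eq_single 0 hterm, show sgl g 0 = g from if_pos rfl]
    have hcol : (‖Φ g‖ ^ p) ^ (1/p) = ‖Φ g‖ := by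
      rw [← Real.rpow_mul (norm_nonneg _), mul_one_div, div_self hp0.ne', Real.rpow_one]
    rw [hcol]
    calc ‖Φ g‖ ≤ ‖Φ‖ * ‖g‖ := Φ.le_opNorm g
      _ ≤ 1 := by rw [hg1, mul_one]; exact hΦ
  have hval : (∑' j, (∑' n, ‖sgl g n (sgl v j)‖ ^ p) ^ (q/p)) ^ (1/q) = ‖v‖ := by
    have hterm : ∀ j, j ≠ 0 → (∑' n, ‖sgl g n (sgl v j)‖ ^ p) ^ (q/p) = 0 := by
      intro j hj
      have hz : ∀ n, ‖sgl g n (sgl v j)‖ ^ p = 0 := by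
        intro n
        rw [show sgl v j = 0 from if_neg hj, map_zero, norm_zero, Real.zero_rpow hp0.ne']
      rw [tsum_congr hz, tsum_zero, Real.zero_rpow (div_ne_zero hq0.ne' hp0.ne')]
    rw [tsum_eq_single 0 hterm]
    have hterm2 : ∀ n, n ≠ 0 → ‖sgl g n (sgl v 0)‖ ^ p = 0 := by
      intro n hn
      rw [show sgl g n = 0 from if_neg hn, ContinuousLinearMap.zero_apply, norm_zero,
        Real.zero_rpow hp0.ne']
    rw [tsum_eq_single 0 hterm2]
    have h00 : ‖sgl g 0 (sgl v 0)‖ = ‖v‖ := by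
      rw [show sgl g 0 = g from if_pos rfl, show sgl v 0 = v from if_pos rfl, hg2,
        RCLike.norm_ofReal, abs_of_nonneg (norm_nonneg v)]
    rw [h00]
    have e1 : (‖v‖ ^ p) ^ (q/p) = ‖v‖ ^ q := by
      rw [← Real.rpow_mul (norm_nonneg v)]
      congr 1
      field_simp
      try ring
    have e2 : (‖v‖ ^ q) ^ (1/q) = ‖v‖ := by
      rw [← Real.rpow_mul (norm_nonneg v), mul_one_div, div_self hq0.ne', Real.rpow_one]
    rw [e1, e2]
  rw [← hval]
  exact le_midNorm hp hq (sgl v) (midSummable_sgl hp hq v) (sgl g) hW hwn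

lemma midSummable_comp {q p : ℝ} (T : E →L[𝕜] F) (x : ℕ → E) (hx : MidSummable 𝕜 q p x) :
    MidSummable 𝕜 q p (fun j => T (x j)) := by
  intro ys hys
  exact (hx (fun n => (ys n).comp T) (weak_comp T ys hys)).congr fun j => rfl

lemma midNorm_comp_le {q p : ℝ} (hp : 1 ≤ p) (hq : 1 ≤ q) (T : E →L[𝕜] F)
    (x : ℕ → E) (hx : MidSummable 𝕜 q p x) :
    midNorm 𝕜 q p (fun j => T (x j)) ≤ ‖T‖ * midNorm 𝕜 q p x := by
  have hp0 : (0:ℝ) < p := lt_of_lt_of_le one_pos hp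
  have hq0 : (0:ℝ) < q := lt_of_lt_of_le one_pos hq
  apply Real.iSup_le _ (mul_nonneg (norm_nonneg T) (midNorm_nonneg x))
  rintro ⟨ys, hy1, hy2⟩
  rcases eq_or_ne ‖T‖ 0 with hT | hT
  · have hT0 : T = 0 := (ContinuousLinearMap.opNorm_zero_iff T).mp hT
    have hz : ∀ j, (∑' n, ‖ys n (T (x j))‖ ^ p) ^ (q/p) = 0 := by
      intro j
      have hz2 : ∀ n, ‖ys n (T (x j))‖ ^ p = 0 := by
        intro n
        rw [hT0, ContinuousLinearMap.zero_apply, map_zero, norm_zero, Real.zero_rpow hp0.ne']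
      rw [tsum_congr hz2, tsum_zero, Real.zero_rpow (div_ne_zero hq0.ne' hp0.ne')]
    rw [tsum_congr hz, tsum_zero, Real.zero_rpow (one_div_ne_zero hq0.ne'), hT, zero_mul]
  · have hTpos : (0:ℝ) < ‖T‖ := (norm_nonneg T).lt_of_ne (Ne.symm hT)
    set c : 𝕜 := ((‖T‖ : ℝ) : 𝕜)⁻¹ with hc
    have hnc : ‖c‖ = ‖T‖⁻¹ := by
      rw [hc, norm_inv, RCLike.norm_ofReal, abs_of_nonneg (norm_nonneg _)]
    set xs : ℕ → StrongDual 𝕜 E := fun n => c • (ys n).comp T with hxs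
    have happ : ∀ (Φ : StrongDual 𝕜 (StrongDual 𝕜 E)) (n : ℕ), Φ (xs n) = c * (pull T Φ) (ys n) := by
      intro Φ n
      simp only [hxs, pull_apply, _root_.map_smul, smul_eq_mul]
    have hx1 : WeaklySummable 𝕜 p xs := by
      intro Φ
      refine ((hy1 (pull T Φ)).mul_left (‖c‖ ^ p)).congr fun n => ?_
      rw [happ Φ n, norm_mul, Real.mul_rpow (norm_nonneg _) (norm_nonneg _)]
    have hx2 : weakNorm 𝕜 p xs ≤ 1 := by
      apply Real.iSup_le _ zero_le_one
      rintro ⟨Φ, hΦ⟩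
      have hsum : (∑' n, ‖Φ (xs n)‖ ^ p) ≤ 1 := by
        have h1 : ∀ n, ‖Φ (xs n)‖ ^ p = ‖c‖ ^ p * ‖(pull T Φ) (ys n)‖ ^ p := by
          intro n
          rw [happ Φ n, norm_mul, Real.mul_rpow (norm_nonneg _) (norm_nonneg _)]
        rw [tsum_congr h1, tsum_mul_left]
        have h2 : (∑' n, ‖(pull T Φ) (ys n)‖ ^ p) ≤ ‖pull T Φ‖ ^ p :=
          weak_tsum_le hp ys hy1 hy2 _
        have h3 : ‖pull T Φ‖ ^ p ≤ ‖T‖ ^ p := by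
          apply Real.rpow_le_rpow (norm_nonneg _) _ hp0.le
          calc ‖pull T Φ‖ ≤ ‖Φ‖ * ‖T‖ := pull_norm_le T Φ
            _ ≤ 1 * ‖T‖ := mul_le_mul_of_nonneg_right hΦ (norm_nonneg T)
            _ = ‖T‖ := one_mul _
        calc ‖c‖ ^ p * (∑' n, ‖(pull T Φ) (ys n)‖ ^ p) ≤ ‖c‖ ^ p * ‖T‖ ^ p :=
              mul_le_mul_of_nonneg_left (h2.trans h3) (by positivity)
          _ = 1 := by
              rw [hnc, Real.inv_rpow (norm_nonneg T),
                inv_mul_cancel₀ (Real.rpow_pos_of_pos hTpos p).ne']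
      calc (∑' n, ‖Φ (xs n)‖ ^ p) ^ (1/p) ≤ (1:ℝ) ^ (1/p) :=
            Real.rpow_le_rpow (tsum_nonneg fun n => by positivity) hsum (by positivity)
        _ = 1 := Real.one_rpow _
    have hval : ∀ j, (∑' n, ‖ys n (T (x j))‖ ^ p) = ‖T‖ ^ p * ∑' n, ‖xs n (x j)‖ ^ p := by
      intro j
      have h1 : ∀ n, ‖ys n (T (x j))‖ ^ p = ‖T‖ ^ p * ‖xs n (x j)‖ ^ p := by
        intro n
        have h2 : xs n (x j) = c * (ys n (T (x j))) := by
          simp only [hxs, ContinuousLinearMap.smul_apply, ContinuousLinearMap.comp_apply,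
            smul_eq_mul]
        have h3 : ‖xs n (x j)‖ = ‖T‖⁻¹ * ‖ys n (T (x j))‖ := by rw [h2, norm_mul, hnc]
        rw [h3, Real.mul_rpow (inv_nonneg.mpr (norm_nonneg T)) (norm_nonneg _),
          Real.inv_rpow (norm_nonneg T), ← mul_assoc,
          mul_inv_cancel₀ (Real.rpow_pos_of_pos hTpos p).ne', one_mul]
      rw [tsum_congr h1, tsum_mul_left]
    have hfin : (∑' j, (∑' n, ‖ys n (T (x j))‖ ^ p) ^ (q/p)) ^ (1/q)
        = ‖T‖ * (∑' j, (∑' n, ‖xs n (x j)‖ ^ p) ^ (q/p)) ^ (1/q) := by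
      have h1 : ∀ j, (∑' n, ‖ys n (T (x j))‖ ^ p) ^ (q/p)
          = ‖T‖ ^ q * (∑' n, ‖xs n (x j)‖ ^ p) ^ (q/p) := by
        intro j
        rw [hval j, Real.mul_rpow (by positivity) (tsum_nonneg fun n => by positivity),
          ← Real.rpow_mul (norm_nonneg T), show p * (q/p) = q from by field_simp]
      rw [tsum_congr h1, tsum_mul_left,
        Real.mul_rpow (by positivity)
          (tsum_nonneg fun j => Real.rpow_nonneg (tsum_nonneg fun n => by positivity) _),
        ← Real.rpow_mul (norm_nonneg T), mul_one_div, div_self hq0.ne', Real.rpow_one]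
    rw [hfin]
    exact mul_le_mul_of_nonneg_left (le_midNorm hp hq x hx xs hx1 hx2) (norm_nonneg T)

end Helpers

/-- a bounded linear operator `T : E → F` maps mid `(q,p)`-summable sequences to
mid `(q,p)`-summable sequences, and the induced operator
`T̂ : ℓ_{q,p}^mid(E) → ℓ_{q,p}^mid(F)` is bounded with `‖T̂‖ = ‖T‖`. -/
theorem stmt10 [RCLike 𝕜] [NormedAddCommGroup E] [NormedSpace 𝕜 E] [CompleteSpace E]
    [NormedAddCommGroup F] [NormedSpace 𝕜 F] [CompleteSpace F]
    (p q : ℝ) (hp : 1 ≤ p) (hq : 1 ≤ q) (T : E →L[𝕜] F) :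
    (∀ x : ℕ → E, MidSummable 𝕜 q p x → MidSummable 𝕜 q p fun j => T (x j)) ∧
    sInf {C : ℝ | 0 ≤ C ∧ ∀ x : ℕ → E, MidSummable 𝕜 q p x →
        midNorm 𝕜 q p (fun j => T (x j)) ≤ C * midNorm 𝕜 q p x} = ‖T‖ := by
  constructor
  · exact fun x hx => midSummable_comp T x hx
  · apply le_antisymm
    · apply csInf_le
      · exact ⟨0, fun C hC => hC.1⟩
      · exact ⟨norm_nonneg T, fun x hx => midNorm_comp_le hp hq T x hx⟩
    · apply le_csInf
      · exact ⟨‖T‖, norm_nonneg T, fun x hx => midNorm_comp_le hp hq T x hx⟩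
      · rintro C ⟨hC0, hC⟩
        apply ContinuousLinearMap.opNorm_le_bound T hC0
        intro v
        have h1 : (fun j => T (sgl v j)) = sgl (T v) := by
          funext j
          by_cases hj : j = 0
          · simp [sgl, hj]
          · simp [sgl, hj]
        have h2 := hC (sgl v) (midSummable_sgl hp hq v)
        rw [h1] at h2
        calc ‖T v‖ ≤ midNorm 𝕜 q p (sgl (T v)) := norm_le_midNorm_sgl hp hq (T v)
          _ ≤ C * midNorm 𝕜 q p (sgl v) := h2
          _ ≤ C * ‖v‖ := mul_le_mul_of_nonneg_left (midNorm_sgl_le hp hq v) hC0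
end
end

section
/- Let E and F be Banach spaces, 1 ≤ p < ∞ and 1 ≤ r < q < ∞. If T : E → F is a bounded linear operator such that (T(x_j))_{j=1}^∞ is absolutely r-summable in F for every mid (q,p)-summable sequence (x_j)_{j=1}^∞ in E, then T = 0. -/
open NormedSpace MeasureTheory

noncomputable section

variable {𝕜 E F : Type*}

/-- if `r < q` and `T` sends every mid `(q,p)`-summable sequence to an absolutely
`r`-summable sequence, then `T = 0`. -/
theorem stmt12 [RCLike 𝕜] [NormedAddCommGroup E] [NormedSpace 𝕜 E] [CompleteSpace E]
    [NormedAddCommGroup F] [NormedSpace 𝕜 F] [CompleteSpace F]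
    (p q r : ℝ) (hp : 1 ≤ p) (hr : 1 ≤ r) (hrq : r < q) (T : E →L[𝕜] F)
    (h : ∀ x : ℕ → E, MidSummable 𝕜 q p x → Summable fun j => ‖T (x j)‖ ^ r) :
    T = 0 := by
  by_contra hT
  obtain ⟨x, hx⟩ : ∃ x, T x ≠ 0 := by
    by_contra hc
    push_neg at hc
    exact hT (ContinuousLinearMap.ext fun y => by simp [hc y])
  have hr0 : (0:ℝ) < r := lt_of_lt_of_le one_pos hr
  have hp0 : (0:ℝ) < p := lt_of_lt_of_le one_pos hp
  set a : ℕ → ℝ := fun j => ((j:ℝ)+1) ^ (-(1/r)) with ha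
  have hbase : ∀ j : ℕ, (0:ℝ) < (j:ℝ)+1 := fun j => by positivity
  have hapos : ∀ j, 0 < a j := fun j => Real.rpow_pos_of_pos (hbase j) _
  have haq : ∀ j, a j ^ q = (((j:ℝ)+1) ^ (q/r))⁻¹ := by
    intro j
    rw [ha, ← Real.rpow_mul (hbase j).le, ← Real.rpow_neg (hbase j).le]
    congr 1
    field_simp
  have har : ∀ j, a j ^ r = ((j:ℝ)+1)⁻¹ := by
    intro j
    rw [ha, ← Real.rpow_mul (hbase j).le,
      show -(1/r) * r = -1 by field_simp, Real.rpow_neg_one]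
  -- summability of a^q
  have hsumq : Summable fun j => a j ^ q := by
    have h1 : (1:ℝ) < q / r := (one_lt_div hr0).2 hrq
    have h2 : Summable fun n : ℕ => (((n:ℝ)) ^ (q/r))⁻¹ :=
      (Real.summable_nat_rpow_inv).2 h1
    have h3 := (summable_nat_add_iff 1).2 h2
    simp only [haq]
    convert h3 using 2 with j
    · rfl
    push_cast
    ring_nf
  -- the sequence
  set xs : ℕ → E := fun j => ((a j : 𝕜)) • x with hxs
  have hmid : MidSummable 𝕜 q p xs := by
    intro φs hφs
    have hS : Summable fun n => ‖φs n x‖ ^ p :=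
      hφs (NormedSpace.inclusionInDoubleDual 𝕜 E x)
    set S : ℝ := ∑' n, ‖φs n x‖ ^ p with hSdef
    have hS0 : 0 ≤ S := tsum_nonneg fun n => by positivity
    have key : ∀ j, (∑' n, ‖φs n (xs j)‖ ^ p) ^ (q/p) = a j ^ q * S ^ (q/p) := by
      intro j
      have h1 : ∀ n, ‖φs n (xs j)‖ ^ p = a j ^ p * ‖φs n x‖ ^ p := by
        intro n
        rw [hxs]
        simp only [_root_.map_smul, smul_eq_mul, norm_mul]
        rw [Real.mul_rpow (norm_nonneg _) (norm_nonneg _)]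
        congr 1
        rw [RCLike.norm_ofReal, abs_of_pos (hapos j)]
      simp only [h1]
      rw [tsum_mul_left, Real.mul_rpow (by positivity) hS0]
      congr 1
      rw [← Real.rpow_mul (hapos j).le]
      congr 1
      field_simp
    simp only [key]
    exact (hsumq.mul_right _)
  have hsum := h xs hmid
  have hTnorm : (0:ℝ) < ‖T x‖ := norm_pos_iff.2 hx
  have key2 : ∀ j, ‖T (xs j)‖ ^ r = ((j:ℝ)+1)⁻¹ * ‖T x‖ ^ r := by
    intro j
    rw [hxs]
    simp only [_root_.map_smul, norm_smul]
    rw [Real.mul_rpow (norm_nonneg _) (norm_nonneg _),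
      RCLike.norm_ofReal, abs_of_pos (hapos j), har j]
  rw [funext key2] at hsum
  have hsum2 : Summable fun j : ℕ => ((j:ℝ)+1)⁻¹ :=
    (summable_mul_right_iff (by positivity : ‖T x‖ ^ r ≠ 0)).1 hsum
  have : Summable fun n : ℕ => ((n:ℝ))⁻¹ := by
    rw [← summable_nat_add_iff 1]
    convert hsum2 using 2 with j
    · rfl
    push_cast
    ring
  exact Real.not_summable_natCast_inv this
end
end

section
/- Let E and F be Banach spaces, 1 ≤ p < ∞ and 1 ≤ q < r < ∞. If T : E → F is a bounded linear operator such that (T(x_j))_{j=1}^∞ is mid (q,p)-summable in F for every weakly r-summable sequence (x_j)_{j=1}^∞ in E, then T = 0. -/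
open NormedSpace MeasureTheory

noncomputable section

variable {𝕜 E F : Type*}

/-- if `q < r` and `T` sends every weakly `r`-summable sequence to a mid
`(q,p)`-summable sequence, then `T = 0`. -/
theorem stmt13 [RCLike 𝕜] [NormedAddCommGroup E] [NormedSpace 𝕜 E] [CompleteSpace E]
    [NormedAddCommGroup F] [NormedSpace 𝕜 F] [CompleteSpace F]
    (p q r : ℝ) (hp : 1 ≤ p) (hq : 1 ≤ q) (hqr : q < r) (T : E →L[𝕜] F)
    (h : ∀ x : ℕ → E, WeaklySummable 𝕜 r x → MidSummable 𝕜 q p fun j => T (x j)) :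
    T = 0 := by
  by_contra hT
  have hx : ∃ x : E, T x ≠ 0 := by
    by_contra hc
    push_neg at hc
    exact hT (ContinuousLinearMap.ext fun y => by simp [hc y])
  obtain ⟨x, hx⟩ := hx
  obtain ⟨ψ, hψ1, hψ2⟩ := exists_dual_vector 𝕜 (T x) (norm_ne_zero_iff.mpr hx)
  have hq0 : (0:ℝ) < q := by linarith
  have hp0 : (0:ℝ) < p := by linarith
  have hr0 : (0:ℝ) < r := by linarith
  have hTx : (0:ℝ) < ‖T x‖ := norm_pos_iff.mpr hx
  set a : ℕ → 𝕜 := fun j => (((((j:ℝ)+1) ^ (-(1/q)) : ℝ)) : 𝕜) with ha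
  have hj1 : ∀ j : ℕ, (0:ℝ) < (j:ℝ) + 1 := fun j => by positivity
  have hna : ∀ j, ‖a j‖ = ((j:ℝ)+1) ^ (-(1/q)) := by
    intro j
    rw [ha]
    rw [RCLike.norm_ofReal, abs_of_nonneg (Real.rpow_nonneg (hj1 j).le _)]
  -- weak r-summability of j ↦ a j • x
  have hws : WeaklySummable 𝕜 r (fun j => a j • x) := by
    intro φ
    have key : ∀ j : ℕ, ‖φ (a j • x)‖ ^ r = (((j:ℝ)+1) ^ (-(r/q))) * ‖φ x‖ ^ r := by
      intro j
      rw [_root_.map_smul, norm_smul, Real.mul_rpow (norm_nonneg _) (norm_nonneg _), hna j,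
        ← Real.rpow_mul (hj1 j).le]
      ring_nf
    have hsum : Summable (fun j : ℕ => (((j:ℝ)+1) ^ (-(r/q)))) := by
      have h1 : Summable (fun n : ℕ => ((n:ℝ)) ^ (-(r/q))) := by
        rw [Real.summable_nat_rpow]
        rw [neg_lt, neg_neg]
        rw [lt_div_iff₀ hq0]
        linarith
      have := (summable_nat_add_iff 1).mpr h1
      simpa using this
    simp only [key]
    exact hsum.mul_right _
  -- the test sequence in F*
  set xs : ℕ → StrongDual 𝕜 F := fun n => if n = 0 then ψ else 0 with hxs
  have hxsws : WeaklySummable 𝕜 p xs := by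
    intro Φ
    apply summable_of_ne_finset_zero (s := ({0} : Finset ℕ))
    intro n hn
    simp only [Finset.mem_singleton] at hn
    simp [hxs, hn, Real.zero_rpow hp0.ne']
  have hmid := h (fun j => a j • x) hws xs hxsws
  -- compute the terms
  have hterm : ∀ j : ℕ, (∑' n, ‖xs n (T (a j • x))‖ ^ p) ^ (q / p)
      = (((j:ℝ)+1))⁻¹ * ‖T x‖ ^ q := by
    intro j
    have h1 : (∑' n, ‖xs n (T (a j • x))‖ ^ p) = ‖ψ (T (a j • x))‖ ^ p := by
      apply tsum_eq_single 0
      intro n hn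
      simp [hxs, hn, Real.zero_rpow hp0.ne']
    rw [h1]
    have h2 : ‖ψ (T (a j • x))‖ = ((j:ℝ)+1) ^ (-(1/q)) * ‖T x‖ := by
      rw [_root_.map_smul, _root_.map_smul, hψ2]
      rw [norm_smul, hna]
      congr 1
      simp [abs_of_nonneg hTx.le]
    rw [h2]
    have hnn : (0:ℝ) ≤ ((j:ℝ)+1) ^ (-(1/q)) * ‖T x‖ :=
      mul_nonneg (Real.rpow_nonneg (hj1 j).le _) hTx.le
    rw [← Real.rpow_mul hnn]
    have hpq : p * (q / p) = q := by field_simp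
    rw [hpq]
    rw [Real.mul_rpow (Real.rpow_nonneg (hj1 j).le _) hTx.le]
    rw [← Real.rpow_mul (hj1 j).le]
    have : -(1/q) * q = -1 := by field_simp
    rw [this, Real.rpow_neg_one]
  rw [show (fun j => (∑' n, ‖xs n (T (a j • x))‖ ^ p) ^ (q / p))
      = (fun j : ℕ => (((j:ℝ)+1))⁻¹ * ‖T x‖ ^ q) from funext hterm] at hmid
  have hc : Summable (fun j : ℕ => (((j:ℝ)+1))⁻¹) := by
    have := hmid.mul_right (‖T x‖ ^ q)⁻¹
    simp only [mul_assoc, mul_inv_cancel₀ (by positivity : ‖T x‖ ^ q ≠ 0), mul_one] at this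
    exact this
  have hc' : Summable (fun j : ℕ => ((j:ℝ))⁻¹) := by
    rw [← summable_nat_add_iff 1]
    simpa using hc
  exact Real.not_summable_natCast_inv hc'
end
end
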